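/- arXiv:1412.3622 — 3 statements merged into one kernel-verified Lean document; each statement's English description precedes it below -/
import Mathlib

section
/- If f is an eigenfunction of the Hamming graph F_q^n with eigenvalue λ = (q−1)n − qh, then for every vertex α and every i with 0 ≤ i ≤ n, the sum of f over the sphere of radius i centered at α equals P_i^{(q)}(h;n)·f(α). -/
/-- The q-ary Krawtchouk polynomial value P_i^{(q)}(t;N). -/
def kraw (q i t N : ℕ) : ℤ :=
  ∑ j ∈ Finset.range (i+1),
    (-1:ℤ)^j * ((q:ℤ)-1)^(i-j) * (t.choose j : ℤ) * ((N-t).choose (i-j) : ℤ)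

section AuxHamming

open Polynomial Finset

lemma coeff_one_add_CX_pow (c : ℤ) (n k : ℕ) :
    ((1 + C c * X : ℤ[X])^n).coeff k = c^k * n.choose k := by
  rw [add_comm, add_pow]
  simp only [one_pow, mul_one, mul_pow, ← C_pow]
  rw [← lcoeff_apply, map_sum]
  simp only [lcoeff_apply, ← C_eq_natCast, mul_assoc, coeff_C_mul, coeff_mul_C, coeff_X_pow]
  rw [Finset.sum_eq_single k]
  · by_cases hk : k ≤ n
    · simp
    · simp [Nat.choose_eq_zero_of_lt (lt_of_not_ge hk)]
  · intro j _ hj; simp [Ne.symm hj]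
  · intro h
    simp only [Finset.mem_range, not_lt] at h
    simp [Nat.choose_eq_zero_of_lt h]

lemma one_sub_X_eq : (1 - X : ℤ[X]) = 1 + C (-1) * X := by rw [map_neg, map_one]; ring

lemma kraw_eq_coeff (q t N i : ℕ) :
    kraw q i t N = (((1 - X : ℤ[X])^t * (1 + C ((q:ℤ)-1) * X)^(N-t)).coeff i) := by
  rw [one_sub_X_eq, coeff_mul, Finset.Nat.sum_antidiagonal_eq_sum_range_succ_mk]
  unfold kraw
  refine Finset.sum_congr rfl fun j hj => ?_
  rw [coeff_one_add_CX_pow, coeff_one_add_CX_pow]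
  ring

lemma one_sub_X_mul_derivative (t : ℕ) :
    (1 - X : ℤ[X]) * derivative ((1 - X : ℤ[X])^t) = -(t:ℤ[X]) * (1 - X)^t := by
  rw [derivative_pow]
  have h : derivative (1 - X : ℤ[X]) = -1 := by simp
  rw [h]
  cases t with
  | zero => simp
  | succ t => simp [pow_succ]; ring

lemma one_add_CX_mul_derivative (a : ℤ) (s : ℕ) :
    (1 + C a * X) * derivative ((1 + C a * X)^s) = (s:ℤ[X]) * C a * (1 + C a * X)^s := by
  rw [derivative_pow]
  have h : derivative (1 + C a * X : ℤ[X]) = C a := by simp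
  rw [h]
  cases s with
  | zero => simp
  | succ s => simp [pow_succ]; ring

lemma key_deriv (a : ℤ) (s t : ℕ) :
    (1 + C a * X) * (1 - X) * derivative ((1 - X : ℤ[X])^t * (1 + C a * X)^s)
      = (C (a*s - t) - C (a*(s+t)) * X) * ((1 - X : ℤ[X])^t * (1 + C a * X)^s) := by
  rw [derivative_mul]
  have e1 : (1 + C a * X) * (1 - X) *
      (derivative ((1 - X : ℤ[X])^t) * (1 + C a * X)^s
        + (1 - X : ℤ[X])^t * derivative ((1 + C a * X)^s))
      = ((1 - X : ℤ[X]) * derivative ((1 - X : ℤ[X])^t)) * ((1 + C a * X) * (1 + C a * X)^s)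
        + ((1 - X : ℤ[X]) * (1 - X : ℤ[X])^t) *
          ((1 + C a * X) * derivative ((1 + C a * X)^s)) := by ring
  rw [e1, one_sub_X_mul_derivative, one_add_CX_mul_derivative]
  push_cast [map_sub, map_mul, map_add, C_eq_natCast]
  ring

lemma X_mul_coeff (p : ℤ[X]) (n : ℕ) : (X * p).coeff n = if n = 0 then 0 else p.coeff (n-1) := by
  cases n with
  | zero => simp [coeff_mul, Finset.Nat.antidiagonal_zero]
  | succ n => simp [coeff_X_mul]

lemma kraw_rec (q t N : ℕ) (ht : t ≤ N) (m : ℕ) :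
    ((m:ℤ)+2) * kraw q (m+2) t N
      = ((((q:ℤ)-1)*N - q*t) - ((q:ℤ)-2)*((m:ℤ)+1)) * kraw q (m+1) t N
        - ((q:ℤ)-1)*((N:ℤ)-m) * kraw q m t N := by
  set a : ℤ := (q:ℤ)-1 with ha
  set p : ℤ[X] := (1 - X : ℤ[X])^t * (1 + C a * X)^(N-t) with hp
  have hk := key_deriv a (N-t) t
  have expand : (1 + C a * X) * (1 - X : ℤ[X]) = 1 + (C a - 1) * X - C a * (X * X) := by
    ring
  rw [expand] at hk
  have h2 := congrArg (fun r => Polynomial.coeff r (m+1)) hk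
  simp only [sub_mul, add_mul, one_mul, coeff_add, coeff_sub, mul_assoc, coeff_C_mul,
    coeff_derivative, X_mul_coeff] at h2
  simp only [Nat.add_sub_cancel, if_neg (Nat.succ_ne_zero m), Nat.succ_sub_one] at h2
  rw [← hp] at h2
  -- now h2 relates coeffs of derivative p and p at various indices
  have h3 : (if m = 0 then (0:ℤ) else p.coeff (m-1+1) * (↑(m-1)+1)) = (m:ℤ) * p.coeff m := by
    cases m with
    | zero => simp
    | succ k => simp only [Nat.succ_ne_zero, if_false, Nat.succ_sub_one]; push_cast; ring
  rw [h3] at h2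
  rw [hp, ha] at h2
  rw [← kraw_eq_coeff q t N (m+1+1), ← kraw_eq_coeff q t N (m+1), ← kraw_eq_coeff q t N m] at h2
  rw [ha]
  have e2 : m + 1 + 1 = m + 2 := rfl
  rw [e2] at h2
  push_cast [Nat.cast_sub ht] at h2 ⊢
  linear_combination h2


variable {q n : ℕ}

lemma dist_filter_update (α γ : Fin n → Fin q) (m : Fin n) (v : Fin q) :
    ({j | α j ≠ Function.update γ m v j} : Finset (Fin n))
      = if α m = v then ({j | α j ≠ γ j} : Finset (Fin n)).erase m
        else insert m (({j | α j ≠ γ j} : Finset (Fin n)).erase m) := by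
  ext j
  by_cases hj : j = m
  · subst hj
    by_cases hv : α j = v <;> simp [Function.update_self, hv]
  · by_cases hv : α m = v <;> simp [Function.update_of_ne hj, hj, hv]

lemma dist_update (α γ : Fin n → Fin q) (m : Fin n) (v : Fin q) :
    hammingDist α (Function.update γ m v)
      = (hammingDist α γ - if α m = γ m then 0 else 1) + (if α m = v then 0 else 1) := by
  unfold hammingDist
  rw [dist_filter_update]
  by_cases hv : α m = v <;> by_cases hm : α m = γ m
  · rw [if_pos hv, if_pos hv, if_pos hm, Finset.erase_eq_self.2 (by simp [hm])]
    omega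
  · rw [if_pos hv, if_pos hv, if_neg hm, Finset.card_erase_of_mem (by simp [hm])]
    omega
  · rw [if_neg hv, if_neg hv, if_pos hm,
      Finset.card_insert_of_notMem (Finset.notMem_erase _ _),
      Finset.erase_eq_self.2 (by simp [hm])]
    omega
  · rw [if_neg hv, if_neg hv, if_neg hm,
      Finset.card_insert_of_notMem (Finset.notMem_erase _ _),
      Finset.card_erase_of_mem (by simp [hm])]

lemma sphere_sum {M : Type*} [AddCommMonoid M] (β : Fin n → Fin q)
    (g : (Fin n → Fin q) → M) :
    ∑ γ ∈ univ.filter (fun γ => hammingDist β γ = 1), g γ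
      = ∑ m : Fin n, ∑ v ∈ univ.erase (β m), g (Function.update β m v) := by
  rw [← Finset.sum_sigma (univ : Finset (Fin n)) (fun m => univ.erase (β m))
      (fun p => g (Function.update β p.1 p.2))]
  refine (Finset.sum_bij (fun p _ => Function.update β p.1 p.2) ?_ ?_ ?_ ?_).symm
  · rintro ⟨m, v⟩ hp
    simp only [Finset.mem_sigma, Finset.mem_erase, Finset.mem_univ, and_true] at hp
    simp only [Finset.mem_filter, Finset.mem_univ, true_and]
    rw [dist_update β β m v]
    simp [hp.2, Ne.symm hp.2]
  · rintro ⟨m, v⟩ hp ⟨m', v'⟩ hp' he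
    simp only [Finset.mem_sigma, Finset.mem_erase, Finset.mem_univ, and_true] at hp hp'
    dsimp only at he
    have hm : m = m' := by
      by_contra hne
      have h1 := congrFun he m
      rw [Function.update_self, Function.update_of_ne hne] at h1
      exact hp.2 h1
    subst hm
    have h1 := congrFun he m
    rw [Function.update_self, Function.update_self] at h1
    subst h1
    rfl
  · intro γ hγ
    simp only [Finset.mem_filter, Finset.mem_univ, true_and] at hγ
    have hcard : ({j | β j ≠ γ j} : Finset (Fin n)).card = 1 := hγ
    obtain ⟨m, hm⟩ := Finset.card_eq_one.1 hcard
    have hmem : m ∈ ({j | β j ≠ γ j} : Finset (Fin n)) := hm ▸ Finset.mem_singleton_self m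
    have hne : β m ≠ γ m := by simpa using hmem
    refine ⟨⟨m, γ m⟩, ?_, ?_⟩
    · simp only [Finset.mem_sigma, Finset.mem_erase, Finset.mem_univ, and_true, true_and]
      exact fun h => hne h.symm
    · dsimp only
      funext j
      by_cases hj : j = m
      · subst hj; rw [Function.update_self]
      · rw [Function.update_of_ne hj]
        by_contra hcon
        have hj2 : j ∈ ({j | β j ≠ γ j} : Finset (Fin n)) := by simpa using hcon
        rw [hm] at hj2
        exact hj (Finset.mem_singleton.1 hj2)
  · intros; rfl

lemma card_filter_eq_sub (α γ : Fin n → Fin q) :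
    (univ.filter (fun j => α j = γ j)).card = n - hammingDist α γ := by
  have h := Finset.card_filter_add_card_filter_not
    (s := (univ : Finset (Fin n))) (p := fun j => α j = γ j)
  simp only [Finset.card_univ, Fintype.card_fin] at h
  have h2 : (univ.filter (fun j => ¬ α j = γ j)).card = hammingDist α γ := rfl
  omega

lemma dist_le (α γ : Fin n → Fin q) : hammingDist α γ ≤ n := by
  have : hammingDist α γ ≤ (univ : Finset (Fin n)).card := Finset.card_filter_le _ _
  simpa using this

lemma count_lemma (hq : 2 ≤ q) (α γ : Fin n → Fin q) (i : ℕ) :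
    (univ.filter (fun β => hammingDist α β = i ∧ hammingDist β γ = 1)).card
      = (if hammingDist α γ = i+1 then hammingDist α γ else 0)
        + (if hammingDist α γ = i then hammingDist α γ * (q-2) else 0)
        + (if hammingDist α γ + 1 = i then (n - hammingDist α γ) * (q-1) else 0) := by
  classical
  set k := hammingDist α γ with hk
  rw [Finset.card_filter]
  have step1 : ∑ β : Fin n → Fin q,
      (if hammingDist α β = i ∧ hammingDist β γ = 1 then 1 else 0)
      = ∑ β ∈ univ.filter (fun β => hammingDist γ β = 1),
          (if hammingDist α β = i then 1 else 0) := by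
    rw [Finset.sum_filter]
    refine Finset.sum_congr rfl fun β _ => ?_
    rw [hammingDist_comm γ β]
    by_cases h1 : hammingDist β γ = 1 <;> by_cases h2 : hammingDist α β = i <;>
      simp [h1, h2]
  rw [step1, sphere_sum (M := ℕ) γ (fun β => if hammingDist α β = i then 1 else 0)]
  have hcard_erase : ∀ x : Fin q, (univ.erase x).card = q - 1 := fun x => by
    rw [Finset.card_erase_of_mem (Finset.mem_univ x), Finset.card_univ, Fintype.card_fin]
  rw [← Finset.sum_filter_add_sum_filter_not univ (fun m => α m = γ m)]
  have sum1 : ∑ m ∈ univ.filter (fun m => α m = γ m),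
      ∑ v ∈ univ.erase (γ m), (if hammingDist α (Function.update γ m v) = i then 1 else 0)
      = (n - k) * ((q-1) * (if k + 1 = i then 1 else 0)) := by
    have outer : ∀ m ∈ univ.filter (fun m => α m = γ m),
        (∑ v ∈ univ.erase (γ m),
          (if hammingDist α (Function.update γ m v) = i then (1:ℕ) else 0))
          = (q-1) * (if k + 1 = i then 1 else 0) := by
      intro m hm
      simp only [Finset.mem_filter, Finset.mem_univ, true_and] at hm
      have inner : ∀ v ∈ univ.erase (γ m),
          (if hammingDist α (Function.update γ m v) = i then 1 else 0)
            = (if k + 1 = i then (1:ℕ) else 0) := by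
        intro v hv
        rw [Finset.mem_erase] at hv
        rw [dist_update, if_pos hm, if_neg (show ¬ (α m = v) from fun h => hv.1 (hm.symm.trans h).symm)]
        simp [hk]
      rw [Finset.sum_congr rfl inner, Finset.sum_const, hcard_erase, smul_eq_mul]
    rw [Finset.sum_congr rfl outer, Finset.sum_const, smul_eq_mul, card_filter_eq_sub, ← hk]
  have sum2 : ∑ m ∈ univ.filter (fun m => ¬ α m = γ m),
      ∑ v ∈ univ.erase (γ m), (if hammingDist α (Function.update γ m v) = i then 1 else 0)
      = k * ((if k = i+1 then 1 else 0) + (q-2) * (if k = i then 1 else 0)) := by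
    have hkk : (univ.filter (fun m => ¬ α m = γ m)).card = k := rfl
    have outer : ∀ m ∈ univ.filter (fun m => ¬ α m = γ m),
        (∑ v ∈ univ.erase (γ m),
          (if hammingDist α (Function.update γ m v) = i then (1:ℕ) else 0))
          = (if k = i+1 then 1 else 0) + (q-2) * (if k = i then 1 else 0) := by
      intro m hm
      simp only [Finset.mem_filter, Finset.mem_univ, true_and] at hm
      have hk1 : 1 ≤ k := by
        rw [hk]
        exact Finset.card_pos.2 ⟨m, by simp [hm]⟩
      have hαm : α m ∈ univ.erase (γ m) := Finset.mem_erase.2 ⟨fun h => hm h, Finset.mem_univ _⟩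
      rw [← Finset.add_sum_erase _ _ hαm]
      have t1 : (if hammingDist α (Function.update γ m (α m)) = i then (1:ℕ) else 0)
          = (if k = i + 1 then 1 else 0) := by
        rw [dist_update, if_neg hm, if_pos (show α m = α m from rfl), ← hk,
          if_congr (show (k - 1 + 0 = i) ↔ (k = i + 1) by omega) rfl rfl]
      have t2 : ∀ v ∈ (univ.erase (γ m)).erase (α m),
          (if hammingDist α (Function.update γ m v) = i then (1:ℕ) else 0)
            = (if k = i then 1 else 0) := by
        intro v hv
        rw [Finset.mem_erase, Finset.mem_erase] at hv
        rw [dist_update, if_neg hm, if_neg (show ¬ (α m = v) from fun h => hv.1 h.symm), ← hk,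
          if_congr (show (k - 1 + 1 = i) ↔ (k = i) by omega) rfl rfl]
      rw [t1, Finset.sum_congr rfl t2, Finset.sum_const,
        Finset.card_erase_of_mem hαm, hcard_erase, smul_eq_mul,
        show q - 1 - 1 = q - 2 by omega]
    rw [Finset.sum_congr rfl outer, Finset.sum_const, smul_eq_mul, hkk]
  rw [sum1, sum2]
  have hkn : k ≤ n := dist_le α γ
  by_cases h1 : k = i + 1 <;> by_cases h2 : k = i <;> by_cases h3 : k + 1 = i <;>
    simp [h1, h2, h3] <;> omega

lemma comb (hq : 2 ≤ q) (f : (Fin n → Fin q) → ℂ) (α : Fin n → Fin q) (m : ℕ) :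
    ∑ β ∈ univ.filter (fun β => hammingDist α β = m+1),
      ∑ γ ∈ univ.filter (fun γ => hammingDist β γ = 1), f γ
    = ((m:ℂ)+2) * (∑ γ ∈ univ.filter (fun γ => hammingDist α γ = m+2), f γ)
      + ((m:ℂ)+1)*((q:ℂ)-2) * (∑ γ ∈ univ.filter (fun γ => hammingDist α γ = m+1), f γ)
      + ((n:ℂ)-(m:ℂ))*((q:ℂ)-1) * (∑ γ ∈ univ.filter (fun γ => hammingDist α γ = m), f γ) := by
  classical
  have claim1 : ∑ β ∈ univ.filter (fun β => hammingDist α β = m+1),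
      ∑ γ ∈ univ.filter (fun γ => hammingDist β γ = 1), f γ
      = ∑ β : Fin n → Fin q, ∑ γ : Fin n → Fin q,
          (if hammingDist α β = m+1 ∧ hammingDist β γ = 1 then f γ else 0) := by
    rw [Finset.sum_filter]
    refine Finset.sum_congr rfl fun β _ => ?_
    by_cases hA : hammingDist α β = m+1
    · simp only [hA, if_true, true_and, Finset.sum_filter]
    · simp [hA]
  rw [claim1, Finset.sum_comm]
  have claim2 : ∀ γ : Fin n → Fin q,
      ∑ β : Fin n → Fin q, (if hammingDist α β = m+1 ∧ hammingDist β γ = 1 then f γ else 0)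
      = ((univ.filter (fun β => hammingDist α β = m+1 ∧ hammingDist β γ = 1)).card : ℂ)
          * f γ := by
    intro γ
    rw [← Finset.sum_filter, Finset.sum_const, nsmul_eq_mul]
  rw [Finset.sum_congr rfl fun γ _ => claim2 γ]
  have claim3 : ∀ γ : Fin n → Fin q,
      ((univ.filter (fun β => hammingDist α β = m+1 ∧ hammingDist β γ = 1)).card : ℂ) * f γ
      = (if hammingDist α γ = m+1+1 then ((hammingDist α γ : ℂ)) * f γ else 0)
        + (if hammingDist α γ = m+1 then ((hammingDist α γ : ℂ)) * (((q:ℂ))-2) * f γ else 0)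
        + (if hammingDist α γ + 1 = m+1 then
            (((n:ℂ)) - (hammingDist α γ : ℂ)) * (((q:ℂ))-1) * f γ else 0) := by
    intro γ
    rw [count_lemma hq α γ (m+1)]
    have hd : hammingDist α γ ≤ n := dist_le α γ
    push_cast [apply_ite (fun x : ℕ => (x:ℂ)), Nat.cast_sub hd,
      Nat.cast_sub (show 2 ≤ q from hq), Nat.cast_sub (show 1 ≤ q by omega)]
    split_ifs <;> ring
  rw [Finset.sum_congr rfl fun γ _ => claim3 γ]
  rw [Finset.sum_add_distrib, Finset.sum_add_distrib]
  congr 1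
  · congr 1
    · have hfe : (univ.filter (fun γ => hammingDist α γ = m + 1 + 1))
          = (univ.filter (fun γ => hammingDist α γ = m + 2)) := by
        apply Finset.filter_congr
        intro γ _
        constructor <;> (intro hx; omega)
      rw [← Finset.sum_filter, hfe, Finset.mul_sum]
      refine Finset.sum_congr rfl fun γ hγ => ?_
      simp only [Finset.mem_filter] at hγ
      rw [hγ.2]
      push_cast; ring
    · rw [← Finset.sum_filter, Finset.mul_sum]
      refine Finset.sum_congr rfl fun γ hγ => ?_
      simp only [Finset.mem_filter] at hγ
      rw [hγ.2]
      push_cast; ring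
  · have hfe : (univ.filter (fun γ => hammingDist α γ + 1 = m + 1))
        = (univ.filter (fun γ => hammingDist α γ = m)) := by
      apply Finset.filter_congr
      intro γ _
      constructor <;> (intro hx; omega)
    rw [← Finset.sum_filter, hfe, Finset.mul_sum]
    refine Finset.sum_congr rfl fun γ hγ => ?_
    simp only [Finset.mem_filter] at hγ
    rw [hγ.2]



end AuxHamming

/-- For an eigenfunction f with eigenvalue (q−1)n−qh, the sum of f over any sphere
of radius i equals P_i^{(q)}(h;n)·f(α). -/
theorem stmt3 (q n h : ℕ) (hq : 2 ≤ q) (hn : 1 ≤ n) (hh : h ≤ n)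
    (f : (Fin n → Fin q) → ℂ)
    (hf : ∀ α, ∑ β ∈ Finset.univ.filter (fun β => hammingDist α β = 1), f β
            = (((q:ℂ)-1)*n - q*h) * f α)
    (α : Fin n → Fin q) (i : ℕ) (hi : i ≤ n) :
    ∑ β ∈ Finset.univ.filter (fun β => hammingDist α β = i), f β
      = (kraw q i h n : ℂ) * f α := by
  suffices main : ∀ m : ℕ,
      ((∑ β ∈ Finset.univ.filter (fun β => hammingDist α β = m), f β)
          = (kraw q m h n : ℂ) * f α)
      ∧ ((∑ β ∈ Finset.univ.filter (fun β => hammingDist α β = m+1), f β)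
          = (kraw q (m+1) h n : ℂ) * f α) by
    exact (main i).1
  intro m
  induction m with
  | zero =>
    constructor
    · have hset : Finset.univ.filter (fun β => hammingDist α β = 0) = {α} := by
        ext β
        simp [hammingDist_eq_zero, eq_comm]
      rw [hset, Finset.sum_singleton]
      simp [kraw]
    · show (∑ β ∈ Finset.univ.filter (fun β => hammingDist α β = 1), f β)
        = (kraw q 1 h n : ℂ) * f α
      have hk1 : (kraw q 1 h n : ℂ) = ((q:ℂ)-1)*n - q*h := by
        have e : kraw q 1 h n = ((q:ℤ)-1) * (((n-h : ℕ)):ℤ) - (h:ℤ) := by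
          simp [kraw, Finset.sum_range_succ]
          ring
        rw [e]
        push_cast [Nat.cast_sub hh]
        ring
      rw [hf α, hk1]
  | succ m ih =>
    refine ⟨ih.2, ?_⟩
    show (∑ β ∈ Finset.univ.filter (fun β => hammingDist α β = m+2), f β)
        = (kraw q (m+2) h n : ℂ) * f α
    have hcomb := comb hq f α m
    have hsum : ∑ β ∈ Finset.univ.filter (fun β => hammingDist α β = m+1),
        ∑ γ ∈ Finset.univ.filter (fun γ => hammingDist β γ = 1), f γ
        = (((q:ℂ)-1)*n - q*h) * ∑ β ∈ Finset.univ.filter (fun β => hammingDist α β = m+1), f β := by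
      rw [Finset.mul_sum]
      exact Finset.sum_congr rfl fun β _ => hf β
    have hrecC : ((m:ℂ)+2) * (kraw q (m+2) h n : ℂ)
        = ((((q:ℂ)-1)*n - q*h) - ((q:ℂ)-2)*((m:ℂ)+1)) * (kraw q (m+1) h n : ℂ)
          - ((q:ℂ)-1)*((n:ℂ)-(m:ℂ)) * (kraw q m h n : ℂ) := by
      exact_mod_cast congrArg (fun z : ℤ => (z:ℂ)) (kraw_rec q h n hh m)
    have hne : ((m:ℂ)+2) ≠ 0 := by
      have e : ((m:ℂ)+2) = ((m+2 : ℕ):ℂ) := by push_cast; ring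
      rw [e]
      exact_mod_cast Nat.succ_ne_zero (m+1)
    apply mul_left_cancel₀ hne
    have E := hsum.symm.trans hcomb
    linear_combination (-1 : ℂ) * E
      + ((((q:ℂ)-1)*n - q*h) - ((m:ℂ)+1)*((q:ℂ)-2)) * ih.2
      - (((n:ℂ)-(m:ℂ))*((q:ℂ)-1)) * ih.1
      - f α * hrecC
end

section
/- Let f be a λ-eigenfunction of F_q^n with λ = (q−1)n − qh. Then for every vertex α and every subset I ⊆ {1,...,n}, the identity (x+(q−1)y)^{h−|Ī|} g_f^{Ī,α}(x,y) = (x'+(q−1)y')^{h−|I|} g_f^{I,α}(x',y') holds, where x' = x+(q−2)y and y' = −y, interpreted as an identity of rational functions (equivalently, after clearing negative exponents, of polynomials). -/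
/-- Local distribution component v_j^{I,f}(α): sum of f over the face Γ^I(α)
intersected with the sphere of radius j around α. -/
noncomputable def locdist {q n : ℕ} (f : (Fin n → Fin q) → ℂ) (α : Fin n → Fin q)
    (I : Finset (Fin n)) (j : ℕ) : ℂ :=
  ∑ β ∈ Finset.univ.filter
      (fun β : Fin n → Fin q => (∀ i ∈ Iᶜ, β i = α i) ∧ hammingDist α β = j), f β

namespace S6

noncomputable def om (q : ℕ) : ℂ := Complex.exp (2 * Real.pi * Complex.I / q)

noncomputable def chi {q n : ℕ} (u β : Fin n → Fin q) : ℂ :=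
  ∏ i, om q ^ ((u i : ℕ) * (β i : ℕ))

def wt {q n : ℕ} (u : Fin n → Fin q) : ℕ := (Finset.univ.filter (fun i => (u i : ℕ) ≠ 0)).card

noncomputable def fc {q n : ℕ} (f : (Fin n → Fin q) → ℂ) (u : Fin n → Fin q) : ℂ :=
  ∑ γ, f γ * (starRingEnd ℂ) (chi u γ)

lemma om_prim {q : ℕ} (hq : 2 ≤ q) : IsPrimitiveRoot (om q) q :=
  Complex.isPrimitiveRoot_exp q (by omega)

lemma om_pow_q {q : ℕ} (hq : 2 ≤ q) : (om q) ^ q = 1 := (om_prim hq).pow_eq_one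

lemma om_pow_ne_one {q : ℕ} (hq : 2 ≤ q) {a : ℕ} (h0 : a ≠ 0) (hlt : a < q) :
    (om q) ^ a ≠ 1 := by
  intro h
  have h2 := (om_prim hq).dvd_of_pow_eq_one _ h
  exact absurd (Nat.le_of_dvd (by omega) h2) (by omega)

lemma sum_pow' {q : ℕ} (hq : 2 ≤ q) {z : ℂ} (hz1 : z ≠ 1) (hzq : z ^ q = 1) :
    ∑ c : Fin q, z ^ (c : ℕ) = 0 := by
  rw [Fin.sum_univ_eq_sum_range (fun c => z^c), geom_sum_eq hz1, hzq]
  simp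

lemma sum_pow {q : ℕ} (hq : 2 ≤ q) (a : Fin q) :
    ∑ c : Fin q, (om q) ^ ((a : ℕ) * (c : ℕ)) = if (a:ℕ) = 0 then (q:ℂ) else 0 := by
  simp_rw [pow_mul]
  by_cases ha : (a:ℕ) = 0
  · simp [ha]
  · rw [if_neg ha]
    exact sum_pow' hq (om_pow_ne_one hq ha a.isLt)
      (by rw [← pow_mul, mul_comm, pow_mul, om_pow_q hq, one_pow])

lemma om_abs {q : ℕ} (hq : 2 ≤ q) : ‖om q‖ = 1 := by
  have h := congrArg (‖·‖) (om_pow_q hq)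
  rw [norm_pow, norm_one] at h
  have h0 : (0:ℝ) ≤ ‖om q‖ := norm_nonneg _
  rcases lt_trichotomy (‖om q‖) 1 with h1 | h1 | h1
  · exact absurd h (by nlinarith [pow_lt_one₀ h0 h1 (by omega : q ≠ 0)])
  · exact h1
  · exact absurd h (by nlinarith [one_lt_pow₀ h1 (by omega : q ≠ 0)])

lemma om_ne_zero {q : ℕ} (hq : 2 ≤ q) : om q ≠ 0 :=
  fun h => by simpa [h] using om_abs hq

lemma conj_om {q : ℕ} (hq : 2 ≤ q) : (starRingEnd ℂ) (om q) = (om q)⁻¹ :=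
  (Complex.inv_eq_conj (om_abs hq)).symm

lemma om_pow_inj_aux {q : ℕ} (hq : 2 ≤ q) {b c : ℕ} (hbc : b ≤ c) (hc : c < q)
    (h : om q ^ b = om q ^ c) : b = c := by
  by_contra hne
  have h2 : om q ^ b * om q ^ (c - b) = om q ^ b * 1 := by
    rw [mul_one, ← pow_add]
    rw [show b + (c - b) = c by omega]
    exact h.symm
  have h3 := mul_left_cancel₀ (pow_ne_zero b (om_ne_zero hq)) h2
  exact om_pow_ne_one hq (by omega) (by omega) h3

lemma om_pow_inj {q : ℕ} (hq : 2 ≤ q) (b c : Fin q) (h : om q ^ (b:ℕ) = om q ^ (c:ℕ)) : b = c := by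
  rcases le_total (b:ℕ) (c:ℕ) with hbc | hbc
  · exact Fin.ext (om_pow_inj_aux hq hbc c.isLt h)
  · exact (Fin.ext (om_pow_inj_aux hq hbc b.isLt h.symm)).symm

lemma orth_single {q : ℕ} (hq : 2 ≤ q) (b c : Fin q) :
    ∑ a : Fin q, om q ^ ((a:ℕ) * (b:ℕ)) * (starRingEnd ℂ) (om q ^ ((a:ℕ) * (c:ℕ)))
      = if b = c then (q:ℂ) else 0 := by
  have hterm : ∀ a : Fin q, om q ^ ((a:ℕ) * (b:ℕ)) * (starRingEnd ℂ) (om q ^ ((a:ℕ) * (c:ℕ)))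
      = (om q ^ (b:ℕ) * (starRingEnd ℂ) (om q ^ (c:ℕ))) ^ (a:ℕ) := by
    intro a
    rw [mul_pow, map_pow, map_pow, ← pow_mul, ← pow_mul]
    ring_nf
  simp_rw [hterm]
  set z : ℂ := om q ^ (b:ℕ) * (starRingEnd ℂ) (om q ^ (c:ℕ)) with hz
  by_cases hbc : b = c
  · subst hbc
    have : z = 1 := by
      rw [hz, Complex.mul_conj, Complex.normSq_eq_norm_sq, norm_pow, om_abs hq]
      simp
    simp [this]
  · rw [if_neg hbc]
    have hz1 : z ≠ 1 := by
      rw [hz, map_pow, conj_om hq, inv_pow]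
      intro h1
      rw [← div_eq_mul_inv, div_eq_one_iff_eq (pow_ne_zero _ (om_ne_zero hq))] at h1
      exact hbc (om_pow_inj hq b c h1)
    refine sum_pow' hq hz1 ?_
    rw [hz, mul_pow, ← pow_mul, mul_comm (b:ℕ) q, pow_mul, om_pow_q hq, one_pow, one_mul,
      ← map_pow, ← pow_mul, mul_comm (c:ℕ) q, pow_mul, om_pow_q hq, one_pow, map_one]


lemma dist_update {q n : ℕ} (α : Fin n → Fin q) (i : Fin n) (c : Fin q) (hc : c ≠ α i) :
    hammingDist α (Function.update α i c) = 1 := by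
  unfold hammingDist
  rw [show (Finset.univ.filter fun j => α j ≠ Function.update α i c j) = {i} from ?_]
  · simp
  · ext j
    simp only [Finset.mem_filter, Finset.mem_univ, true_and, Finset.mem_singleton]
    constructor
    · intro hj
      by_contra hji
      rw [Function.update_of_ne hji] at hj
      exact hj rfl
    · intro hj; subst hj
      rw [Function.update_self]
      exact fun h => hc h.symm

lemma sum_neighbors {q n : ℕ} (α : Fin n → Fin q) (g : (Fin n → Fin q) → ℂ) :
    ∑ β ∈ Finset.univ.filter (fun β => hammingDist α β = 1), g β
      = ∑ i : Fin n, ∑ c ∈ Finset.univ.filter (· ≠ α i), g (Function.update α i c) := by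
  rw [show (∑ i : Fin n, ∑ c ∈ Finset.univ.filter (· ≠ α i), g (Function.update α i c)) = ∑ p ∈ (Finset.univ : Finset (Fin n)).sigma (fun i => Finset.univ.filter (· ≠ α i)), g (Function.update α p.1 p.2) from by rw [Finset.sum_sigma]]
  refine (Finset.sum_bij (fun p _ => Function.update α p.1 p.2) ?_ ?_ ?_ ?_).symm
  · rintro ⟨i, c⟩ hp
    simp only [Finset.mem_sigma, Finset.mem_univ, Finset.mem_filter, true_and] at hp ⊢
    exact dist_update α i c hp
  · rintro ⟨i, c⟩ hp ⟨i', c'⟩ hp' heq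
    simp only [Finset.mem_sigma, Finset.mem_univ, Finset.mem_filter, true_and] at hp hp'
    have hii : i = i' := by
      by_contra hne
      have h1 := congrFun heq i
      simp only [Function.update_self, Function.update_of_ne hne] at h1
      exact hp h1
    subst hii
    have h2 := congrFun heq i
    simp only [Function.update_self] at h2
    subst h2; rfl
  · intro β hβ
    simp only [Finset.mem_filter, Finset.mem_univ, true_and] at hβ
    have h1 : (Finset.univ.filter fun j => α j ≠ β j).card = 1 := hβ
    obtain ⟨i, hi⟩ := Finset.card_eq_one.mp h1
    have hiα : α i ≠ β i := by
      have := Finset.mem_singleton_self i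
      rw [← hi] at this
      exact (Finset.mem_filter.mp this).2
    refine ⟨⟨i, β i⟩, ?_, ?_⟩
    · simp only [Finset.mem_sigma, Finset.mem_univ, Finset.mem_filter, true_and]
      exact fun h => hiα h.symm
    · funext j
      by_cases hj : j = i
      · subst hj; simp only [Function.update_self]
      · simp only [Function.update_of_ne hj]
        by_contra hne
        have : j ∈ Finset.univ.filter fun j => α j ≠ β j := by
          simp only [Finset.mem_filter, Finset.mem_univ, true_and]; exact hne
        rw [hi, Finset.mem_singleton] at this
        exact hj this
  · intros; rfl


lemma chi_update {q n : ℕ} (u α : Fin n → Fin q) (i : Fin n) (c : Fin q) :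
    chi u (Function.update α i c)
      = om q ^ ((u i : ℕ) * (c : ℕ)) * ∏ j ∈ Finset.univ.erase i, om q ^ ((u j : ℕ) * (α j : ℕ)) := by
  unfold chi
  rw [← Finset.mul_prod_erase Finset.univ _ (Finset.mem_univ i), Function.update_self]
  congr 1
  refine Finset.prod_congr rfl (fun j hj => ?_)
  rw [Function.update_of_ne (Finset.ne_of_mem_erase hj)]

lemma chi_eigen {q n : ℕ} (hq : 2 ≤ q) (u α : Fin n → Fin q) :
    ∑ β ∈ Finset.univ.filter (fun β => hammingDist α β = 1), chi u β
      = (((q:ℂ)-1)*n - q*(wt u)) * chi u α := by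
  rw [sum_neighbors]
  have key : ∀ i : Fin n,
      ∑ c ∈ Finset.univ.filter (· ≠ α i), chi u (Function.update α i c)
        = (if (u i : ℕ) = 0 then (q:ℂ) else 0) * chi u α - chi u α := by
    intro i
    set P : ℂ := ∏ j ∈ Finset.univ.erase i, om q ^ ((u j : ℕ) * (α j : ℕ)) with hP
    have hchiα : chi u α = om q ^ ((u i : ℕ) * (α i : ℕ)) * P := by
      unfold chi
      rw [← Finset.mul_prod_erase Finset.univ _ (Finset.mem_univ i)]
    simp_rw [chi_update u α i, ← hP]
    rw [← Finset.sum_mul, Finset.filter_ne', Finset.sum_erase_eq_sub (Finset.mem_univ (α i)),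
      sum_pow hq]
    by_cases h0 : (u i : ℕ) = 0
    · have : P = chi u α := by rw [hchiα, h0, zero_mul, pow_zero, one_mul]
      simp only [h0, zero_mul, pow_zero]
      rw [this]; ring
    · rw [if_neg h0, hchiα]; ring
  rw [Finset.sum_congr rfl (fun i _ => key i), Finset.sum_sub_distrib, ← Finset.sum_mul]
  have hcount : ∑ i : Fin n, (if (u i : ℕ) = 0 then (q:ℂ) else 0)
      = ((n - wt u : ℕ) : ℂ) * q := by
    rw [Finset.sum_ite, Finset.sum_const, Finset.sum_const_zero, add_zero, nsmul_eq_mul]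
    have h1 := Finset.card_filter_add_card_filter_not (s := (Finset.univ : Finset (Fin n)))
      (p := fun i => (u i : ℕ) = 0)
    simp only [Finset.card_univ, Fintype.card_fin] at h1
    have h2 : wt u = (Finset.univ.filter (fun i => ¬ (u i : ℕ) = 0)).card := rfl
    have h3 : (Finset.univ.filter (fun i => (u i : ℕ) = 0)).card = n - wt u := by omega
    rw [h3]
  rw [hcount, Finset.sum_const, Finset.card_univ, Fintype.card_fin, nsmul_eq_mul]
  have hle : wt u ≤ n := by
    have := Finset.card_filter_le (Finset.univ : Finset (Fin n)) (fun i => (u i : ℕ) ≠ 0)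
    simpa [wt] using this
  push_cast [hle]
  ring

lemma orth {q n : ℕ} (hq : 2 ≤ q) (β γ : Fin n → Fin q) :
    ∑ u : Fin n → Fin q, chi u β * (starRingEnd ℂ) (chi u γ)
      = if β = γ then ((q:ℂ))^n else 0 := by
  have hterm : ∀ u : Fin n → Fin q, chi u β * (starRingEnd ℂ) (chi u γ)
      = ∏ i, (om q ^ ((u i : ℕ) * (β i : ℕ)) * (starRingEnd ℂ) (om q ^ ((u i : ℕ) * (γ i : ℕ)))) := by
    intro u
    unfold chi
    rw [map_prod, Finset.prod_mul_distrib]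
  simp_rw [hterm]
  have hps := Finset.prod_univ_sum (fun _ : Fin n => (Finset.univ : Finset (Fin q)))
    (fun i a => om q ^ ((a:ℕ) * (β i:ℕ)) * (starRingEnd ℂ) (om q ^ ((a:ℕ)*(γ i:ℕ))))
  rw [Fintype.piFinset_univ] at hps
  rw [← hps]
  have hfac : ∀ i : Fin n,
      (∑ a : Fin q, om q ^ ((a:ℕ) * (β i : ℕ)) * (starRingEnd ℂ) (om q ^ ((a:ℕ) * (γ i : ℕ))))
        = if β i = γ i then (q:ℂ) else 0 := fun i => orth_single hq (β i) (γ i)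
  rw [Finset.prod_congr rfl (fun i _ => hfac i)]
  by_cases h : β = γ
  · subst h; simp
  · rw [if_neg h]
    obtain ⟨i, hi⟩ : ∃ i, β i ≠ γ i := Function.ne_iff.mp h
    exact Finset.prod_eq_zero (Finset.mem_univ i) (if_neg hi)

lemma inversion {q n : ℕ} (hq : 2 ≤ q) (f : (Fin n → Fin q) → ℂ) (β : Fin n → Fin q) :
    ∑ u, fc f u * chi u β = (q:ℂ)^n * f β := by
  unfold fc
  simp_rw [Finset.sum_mul, mul_assoc]
  rw [Finset.sum_comm]
  have : ∀ γ, ∑ u, f γ * ((starRingEnd ℂ) (chi u γ) * chi u β)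
      = f γ * (if β = γ then ((q:ℂ))^n else 0) := by
    intro γ
    rw [← Finset.mul_sum, ← orth hq β γ]
    congr 1
    exact Finset.sum_congr rfl (fun u _ => mul_comm _ _)
  simp_rw [this]
  rw [Finset.sum_eq_single β (fun b _ hb => by rw [if_neg (fun h => hb h.symm), mul_zero])
    (fun hb => absurd (Finset.mem_univ β) hb)]
  rw [if_pos rfl]; ring

lemma support {q n h : ℕ} (hq : 2 ≤ q) (f : (Fin n → Fin q) → ℂ)
    (hf : ∀ α, ∑ β ∈ Finset.univ.filter (fun β => hammingDist α β = 1), f β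
            = (((q:ℂ)-1)*n - q*h) * f α)
    (u : Fin n → Fin q) (hu : wt u ≠ h) : fc f u = 0 := by
  have key : (((q:ℂ)-1)*n - q*h) * fc f u = (((q:ℂ)-1)*n - q*(wt u)) * fc f u := by
    have h1 : ∑ γ, (∑ β ∈ Finset.univ.filter (fun β => hammingDist γ β = 1), f β)
        * (starRingEnd ℂ) (chi u γ) = (((q:ℂ)-1)*n - q*h) * fc f u := by
      unfold fc
      rw [Finset.mul_sum]
      exact Finset.sum_congr rfl (fun γ _ => by rw [hf γ]; ring)
    have h2 : ∑ γ, (∑ β ∈ Finset.univ.filter (fun β => hammingDist γ β = 1), f β)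
        * (starRingEnd ℂ) (chi u γ) = (((q:ℂ)-1)*n - q*(wt u)) * fc f u := by
      simp_rw [Finset.sum_filter, Finset.sum_mul]
      rw [Finset.sum_comm]
      have h3 : ∀ β, ∑ γ, (if hammingDist γ β = 1 then f β else 0) * (starRingEnd ℂ) (chi u γ)
          = f β * ((((q:ℂ)-1)*n - q*(wt u)) * (starRingEnd ℂ) (chi u β)) := by
        intro β
        have h4 : ∑ γ, (if hammingDist γ β = 1 then f β else 0) * (starRingEnd ℂ) (chi u γ)
            = f β * ∑ γ ∈ Finset.univ.filter (fun γ => hammingDist β γ = 1),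
                (starRingEnd ℂ) (chi u γ) := by
          rw [Finset.sum_filter, Finset.mul_sum]
          refine Finset.sum_congr rfl (fun γ _ => ?_)
          rw [hammingDist_comm β γ]
          by_cases hd : hammingDist γ β = 1 <;> simp [hd]
        rw [h4, ← map_sum, chi_eigen hq u β]
        congr 1
        rw [map_mul]
        congr 1
        simp
      simp_rw [h3]
      unfold fc
      rw [Finset.mul_sum]
      exact Finset.sum_congr rfl (fun β _ => by ring)
    rw [← h1, h2]
  have hne : (((q:ℂ)-1)*n - q*h) - (((q:ℂ)-1)*n - q*(wt u)) ≠ 0 := by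
    have : (((q:ℂ)-1)*n - q*h) - (((q:ℂ)-1)*n - q*(wt u)) = (q:ℂ) * ((wt u : ℂ) - (h:ℂ)) := by ring
    rw [this]
    refine mul_ne_zero (by exact_mod_cast (by omega : q ≠ 0)) ?_
    intro h5
    apply hu
    have : (wt u : ℂ) = (h : ℂ) := by linear_combination h5
    exact_mod_cast this
  have := sub_eq_zero.mpr key
  rw [← sub_mul] at this
  rcases mul_eq_zero.mp this with h6 | h6
  · exact absurd h6 hne
  · exact h6

lemma face_prod {q n : ℕ} (hq : 2 ≤ q) (α : Fin n → Fin q) (I : Finset (Fin n))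
    (g : Fin n → Fin q → ℂ) :
    ∑ β ∈ Finset.univ.filter (fun β : Fin n → Fin q => ∀ i ∈ Iᶜ, β i = α i),
        ∏ i, g i (β i)
      = ∏ i, (if i ∈ I then ∑ c, g i c else g i (α i)) := by
  induction I using Finset.induction_on generalizing g with
  | empty =>
    have hfe : Finset.univ.filter (fun β : Fin n → Fin q => ∀ i ∈ (∅ : Finset (Fin n))ᶜ, β i = α i)
        = {α} := by
      ext β
      simp only [Finset.mem_filter, Finset.mem_univ, true_and, Finset.mem_singleton,
        Finset.compl_empty]
      constructor
      · intro hβ; funext i; exact hβ i trivial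
      · intro hβ; subst hβ; exact fun i _ => rfl
    rw [hfe, Finset.sum_singleton]
    simp
  | @insert a s ha ih =>
    have hbij : ∀ F : (Fin n → Fin q) → ℂ,
        ∑ β ∈ Finset.univ.filter (fun β : Fin n → Fin q => ∀ i ∈ (insert a s)ᶜ, β i = α i), F β
          = ∑ c : Fin q, ∑ β ∈ Finset.univ.filter
              (fun β : Fin n → Fin q => ∀ i ∈ sᶜ, β i = α i), F (Function.update β a c) := by
      intro F
      rw [← Finset.sum_product']
      refine (Finset.sum_bij' (fun p _ => Function.update p.2 a p.1)
        (fun β _ => (β a, Function.update β a (α a))) ?_ ?_ ?_ ?_ ?_).symm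
      · rintro ⟨c, β⟩ hp
        simp only [Finset.mem_product, Finset.mem_filter, Finset.mem_univ, true_and] at hp ⊢
        intro i hi
        have hia : i ≠ a := by
          intro h; subst h; exact (Finset.mem_compl.mp hi) (Finset.mem_insert_self i s)
        rw [Function.update_of_ne hia]
        exact hp i (Finset.mem_compl.mpr (fun h => (Finset.mem_compl.mp hi) (Finset.mem_insert_of_mem h)))
      · intro β hβ
        simp only [Finset.mem_filter, Finset.mem_univ, true_and] at hβ
        simp only [Finset.mem_product, Finset.mem_filter, Finset.mem_univ, true_and]
        intro i hi
        by_cases hia : i = a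
        · subst hia; rw [Function.update_self]
        · rw [Function.update_of_ne hia]
          exact hβ i (Finset.mem_compl.mpr (fun h =>
            (Finset.mem_insert.mp h).elim hia (Finset.mem_compl.mp hi)))
      · rintro ⟨c, β⟩ hp
        simp only [Finset.mem_product, Finset.mem_filter, Finset.mem_univ, true_and] at hp
        have hβa : β a = α a := hp a (Finset.mem_compl.mpr ha)
        simp only [Function.update_self, Function.update_idem]
        congr 1
        rw [← hβa]
        exact Function.update_eq_self a β
      · intro β hβ
        simp only [Function.update_idem, Function.update_eq_self]
      · rintro ⟨c, β⟩ hp; rfl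
    rw [hbij]
    have hinner : ∀ c : Fin q, ∀ β : Fin n → Fin q,
        (∏ i, g i (Function.update β a c i))
          = ∏ i, (Function.update g a (fun _ => g a c)) i (β i) := by
      intro c β
      refine Finset.prod_congr rfl (fun i _ => ?_)
      by_cases hia : i = a
      · subst hia; rw [Function.update_self, Function.update_self]
      · rw [Function.update_of_ne hia, Function.update_of_ne hia]
    have hstep : ∀ c : Fin q,
        ∑ β ∈ Finset.univ.filter (fun β : Fin n → Fin q => ∀ i ∈ sᶜ, β i = α i),
            ∏ i, g i (Function.update β a c i)
          = g a c * ∏ i ∈ Finset.univ.erase a, (if i ∈ s then ∑ c', g i c' else g i (α i)) := by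
      intro c
      simp_rw [hinner c]
      rw [ih (Function.update g a (fun _ => g a c))]
      rw [← Finset.mul_prod_erase Finset.univ _ (Finset.mem_univ a)]
      congr 1
      · rw [if_neg ha, Function.update_self]
      · refine Finset.prod_congr rfl (fun i hi => ?_)
        have hia : i ≠ a := Finset.ne_of_mem_erase hi
        rw [Function.update_of_ne hia]
    rw [Finset.sum_congr rfl (fun c _ => hstep c), ← Finset.sum_mul,
      ← Finset.mul_prod_erase Finset.univ _ (Finset.mem_univ a), if_pos (Finset.mem_insert_self a s)]
    congr 1
    refine Finset.prod_congr rfl (fun i hi => ?_)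
    have hia : i ≠ a := Finset.ne_of_mem_erase hi
    by_cases his : i ∈ s
    · rw [if_pos his, if_pos (Finset.mem_insert_of_mem his)]
    · rw [if_neg his, if_neg (fun h => (Finset.mem_insert.mp h).elim hia his)]


lemma dist_le_of_face {q n : ℕ} {α β : Fin n → Fin q} {I : Finset (Fin n)}
    (hβ : ∀ i ∈ Iᶜ, β i = α i) : hammingDist α β ≤ I.card := by
  unfold hammingDist
  refine Finset.card_le_card (fun i hi => ?_)
  simp only [Finset.mem_filter, Finset.mem_univ, true_and] at hi
  by_contra hiI
  exact hi (hβ i (Finset.mem_compl.mpr hiI)).symm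

lemma filter_ne_face {q n : ℕ} {α β : Fin n → Fin q} {I : Finset (Fin n)}
    (hβ : ∀ i ∈ Iᶜ, β i = α i) :
    I.filter (fun i => ¬ β i = α i) = Finset.univ.filter (fun i => α i ≠ β i) := by
  ext i
  simp only [Finset.mem_filter, Finset.mem_univ, true_and]
  constructor
  · rintro ⟨_, hne⟩; exact fun h => hne h.symm
  · intro hne
    have hiI : i ∈ I := by
      by_contra hiI
      exact hne (hβ i (Finset.mem_compl.mpr hiI)).symm
    exact ⟨hiI, fun h => hne h.symm⟩

lemma chi_enum {q n : ℕ} (hq : 2 ≤ q) (u α : Fin n → Fin q) (I : Finset (Fin n)) (x y : ℂ) :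
    ∑ j ∈ Finset.range (I.card + 1), locdist (chi u) α I j * y^j * x^(I.card - j)
      = (∏ i ∈ I, (if (u i : ℕ) = 0 then x + ((q:ℂ)-1)*y
            else om q ^ ((u i : ℕ)*(α i : ℕ)) * (x - y)))
        * ∏ i ∈ Iᶜ, om q ^ ((u i : ℕ)*(α i : ℕ)) := by
  -- Step 1: rewrite as a sum over the face
  have step1 : ∑ j ∈ Finset.range (I.card + 1), locdist (chi u) α I j * y^j * x^(I.card - j)
      = ∑ β ∈ Finset.univ.filter (fun β : Fin n → Fin q => ∀ i ∈ Iᶜ, β i = α i),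
          chi u β * y^(hammingDist α β) * x^(I.card - hammingDist α β) := by
    unfold locdist
    simp_rw [Finset.sum_mul]
    have hff : ∀ j : ℕ, Finset.univ.filter
        (fun β : Fin n → Fin q => (∀ i ∈ Iᶜ, β i = α i) ∧ hammingDist α β = j)
        = (Finset.univ.filter (fun β : Fin n → Fin q => ∀ i ∈ Iᶜ, β i = α i)).filter
            (fun β => hammingDist α β = j) := by
      intro j; rw [Finset.filter_filter]
    simp_rw [hff]
    rw [← Finset.sum_fiberwise_of_maps_to (g := fun β => hammingDist α β)
      (fun β hβ => by
        simp only [Finset.mem_filter, Finset.mem_univ, true_and] at hβ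
        exact Finset.mem_range.mpr (Nat.lt_succ_of_le (dist_le_of_face hβ)))]
    refine Finset.sum_congr rfl (fun j _ => Finset.sum_congr rfl (fun β hβ => ?_))
    simp only [Finset.mem_filter] at hβ
    rw [hβ.2]
  rw [step1]
  -- Step 2: write summand as a product
  set G : Fin n → Fin q → ℂ := fun i c =>
    om q ^ ((u i : ℕ) * (c : ℕ)) * (if i ∈ I then (if c = α i then x else y) else 1) with hG
  have step2 : ∀ β ∈ Finset.univ.filter (fun β : Fin n → Fin q => ∀ i ∈ Iᶜ, β i = α i),
      chi u β * y^(hammingDist α β) * x^(I.card - hammingDist α β) = ∏ i, G i (β i) := by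
    intro β hβ
    simp only [Finset.mem_filter, Finset.mem_univ, true_and] at hβ
    rw [hG]
    rw [Finset.prod_mul_distrib]
    have h1 : (∏ i, (if i ∈ I then (if β i = α i then x else y) else 1))
        = ∏ i ∈ I, (if β i = α i then x else y) := by
      rw [Finset.prod_ite_mem Finset.univ I, Finset.univ_inter]
    rw [h1, Finset.prod_ite, Finset.prod_const, Finset.prod_const]
    have hcne : (I.filter (fun i => ¬ β i = α i)).card = hammingDist α β := by
      rw [filter_ne_face hβ]; rfl
    have hceq : (I.filter (fun i => β i = α i)).card = I.card - hammingDist α β := by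
      have := Finset.card_filter_add_card_filter_not
        (s := I) (p := fun i => β i = α i)
      omega
    rw [hcne, hceq]
    unfold chi
    ring
  rw [Finset.sum_congr rfl step2, face_prod hq α I G]
  -- Step 3: compute the factors
  have hfac : ∀ i ∈ I, (∑ c, G i c)
      = (if (u i : ℕ) = 0 then x + ((q:ℂ)-1)*y else om q ^ ((u i : ℕ)*(α i : ℕ)) * (x - y)) := by
    intro i hiI
    rw [hG]
    simp only [if_pos hiI]
    have hsplit : ∀ c : Fin q, om q ^ ((u i : ℕ) * (c : ℕ)) * (if c = α i then x else y)
        = om q ^ ((u i : ℕ) * (c : ℕ)) * y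
          + (if c = α i then om q ^ ((u i : ℕ) * (c : ℕ)) * (x - y) else 0) := by
      intro c
      by_cases hc : c = α i <;> simp [hc] <;> ring
    simp_rw [hsplit]
    rw [Finset.sum_add_distrib, ← Finset.sum_mul, sum_pow hq]
    rw [Finset.sum_ite_eq' Finset.univ (α i)
      (fun c => om q ^ ((u i : ℕ) * (c : ℕ)) * (x - y)), if_pos (Finset.mem_univ _)]
    by_cases h0 : (u i : ℕ) = 0
    · rw [if_pos h0, if_pos h0, h0, zero_mul, pow_zero, one_mul]
      ring
    · rw [if_neg h0, if_neg h0, zero_mul, zero_add]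
  have hfac2 : ∀ i, ¬ i ∈ I → G i (α i) = om q ^ ((u i : ℕ)*(α i : ℕ)) := by
    intro i hiI
    rw [hG]
    simp only [if_neg hiI, mul_one]
  rw [← Finset.prod_mul_prod_compl I
    (fun i => if i ∈ I then ∑ c, G i c else G i (α i))]
  congr 1
  · refine Finset.prod_congr rfl (fun i hi => ?_)
    rw [if_pos hi, hfac i hi]
  · refine Finset.prod_congr rfl (fun i hi => ?_)
    rw [if_neg (Finset.mem_compl.mp hi), hfac2 i (Finset.mem_compl.mp hi)]

lemma prod_split {q n : ℕ} (u α : Fin n → Fin q) (s : Finset (Fin n)) (A B : ℂ) :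
    ∏ i ∈ s, (if (u i : ℕ) = 0 then A else om q ^ ((u i : ℕ)*(α i : ℕ)) * B)
      = A ^ (s.filter (fun i => (u i : ℕ) = 0)).card
        * B ^ (s.filter (fun i => ¬ (u i : ℕ) = 0)).card
        * ∏ i ∈ s.filter (fun i => ¬ (u i : ℕ) = 0), om q ^ ((u i : ℕ)*(α i : ℕ)) := by
  rw [Finset.prod_ite, Finset.prod_const, Finset.prod_mul_distrib, Finset.prod_const]
  ring

lemma prod_om {q n : ℕ} (u α : Fin n → Fin q) (s : Finset (Fin n)) :
    ∏ i ∈ s, om q ^ ((u i : ℕ)*(α i : ℕ))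
      = ∏ i ∈ s.filter (fun i => ¬ (u i : ℕ) = 0), om q ^ ((u i : ℕ)*(α i : ℕ)) := by
  rw [← Finset.prod_filter_mul_prod_filter_not s (fun i => (u i : ℕ) = 0)]
  rw [Finset.prod_congr rfl (fun i hi => ?_), Finset.prod_const_one, one_mul]
  rw [(Finset.mem_filter.mp hi).2, zero_mul, pow_zero]

lemma card_filter_split {n : ℕ} (p : Fin n → Prop) [DecidablePred p] (I : Finset (Fin n)) :
    (Finset.univ.filter p).card = (I.filter p).card + (Iᶜ.filter p).card := by
  rw [← Finset.card_union_of_disjoint]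
  · congr 1
    ext i
    simp only [Finset.mem_union, Finset.mem_filter, Finset.mem_univ, true_and,
      Finset.mem_compl]
    constructor
    · intro hp
      by_cases hiI : i ∈ I
      · exact Or.inl ⟨hiI, hp⟩
      · exact Or.inr ⟨hiI, hp⟩
    · rintro (⟨_, hp⟩ | ⟨_, hp⟩) <;> exact hp
  · exact Finset.disjoint_filter_filter (disjoint_compl_right)

lemma chi_case {q n h : ℕ} (hq : 2 ≤ q) (u α : Fin n → Fin q) (hu : wt u = h)
    (I : Finset (Fin n)) (x y : ℂ) :
    (x + ((q:ℂ)-1)*y)^h * (x - y)^I.card *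
        ∑ j ∈ Finset.range (Iᶜ.card + 1), locdist (chi u) α Iᶜ j * y^j * x^(Iᶜ.card - j) =
      (x - y)^h * (x + ((q:ℂ)-1)*y)^(Iᶜ.card) *
        ∑ j ∈ Finset.range (I.card + 1),
          locdist (chi u) α I j * (-y)^j * (x + ((q:ℂ)-2)*y)^(I.card - j) := by
  rw [chi_enum hq u α Iᶜ x y, chi_enum hq u α I (x + ((q:ℂ)-2)*y) (-y)]
  rw [compl_compl]
  have hF2 : ∀ i ∈ I, (if (u i : ℕ) = 0 then (x + ((q:ℂ)-2)*y) + ((q:ℂ)-1)*(-y)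
        else om q ^ ((u i : ℕ)*(α i : ℕ)) * ((x + ((q:ℂ)-2)*y) - (-y)))
      = (if (u i : ℕ) = 0 then (x - y)
        else om q ^ ((u i : ℕ)*(α i : ℕ)) * (x + ((q:ℂ)-1)*y)) := by
    intro i _
    by_cases h0 : (u i : ℕ) = 0
    · rw [if_pos h0, if_pos h0]; ring
    · rw [if_neg h0, if_neg h0]; ring_nf
  rw [Finset.prod_congr rfl hF2]
  rw [prod_split u α Iᶜ, prod_split u α I, prod_om u α I, prod_om u α Iᶜ]
  -- exponent bookkeeping
  set aI := (I.filter (fun i => ¬ (u i : ℕ) = 0)).card with haI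
  set aIc := (Iᶜ.filter (fun i => ¬ (u i : ℕ) = 0)).card with haIc
  set zI := (I.filter (fun i => (u i : ℕ) = 0)).card with hzI
  set zIc := (Iᶜ.filter (fun i => (u i : ℕ) = 0)).card with hzIc
  have h1 : aI + aIc = h := by
    rw [haI, haIc, ← card_filter_split]
    exact hu
  have h2 : zI + aI = I.card := by
    rw [hzI, haI]
    exact Finset.card_filter_add_card_filter_not _
  have h3 : zIc + aIc = Iᶜ.card := by
    rw [hzIc, haIc]
    exact Finset.card_filter_add_card_filter_not _
  have e1 : h + zIc = Iᶜ.card + aI := by omega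
  have e2 : I.card + aIc = h + zI := by omega
  set A := x + ((q:ℂ)-1)*y
  set B := x - y
  set WI := ∏ i ∈ I.filter (fun i => ¬ (u i : ℕ) = 0), om q ^ ((u i : ℕ)*(α i : ℕ))
  set WIc := ∏ i ∈ Iᶜ.filter (fun i => ¬ (u i : ℕ) = 0), om q ^ ((u i : ℕ)*(α i : ℕ))
  calc A^h * B^I.card * (A^zIc * B^aIc * WIc * WI)
      = A^(h+zIc) * B^(I.card+aIc) * (WIc * WI) := by rw [pow_add, pow_add]; ring
    _ = A^(Iᶜ.card+aI) * B^(h+zI) * (WIc * WI) := by rw [e1, e2]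
    _ = B^h * A^Iᶜ.card * (B^zI * A^aI * WI * WIc) := by rw [pow_add, pow_add]; ring

lemma locdist_sum {q n : ℕ} (hq : 2 ≤ q) (f : (Fin n → Fin q) → ℂ) (α : Fin n → Fin q)
    (J : Finset (Fin n)) (j : ℕ) :
    (q:ℂ)^n * locdist f α J j = ∑ u, fc f u * locdist (chi u) α J j := by
  unfold locdist
  rw [Finset.mul_sum]
  have h1 : ∀ β, (q:ℂ)^n * f β = ∑ u, fc f u * chi u β := fun β => (inversion hq f β).symm
  simp_rw [h1]
  rw [Finset.sum_comm]
  exact Finset.sum_congr rfl (fun u _ => (Finset.mul_sum _ _ _).symm)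


end S6

open S6 in
/-- Relation between the local enumerators of a λ-eigenfunction in two orthogonal
faces: (x+(q−1)y)^{h−|Ī|} g_f^{Ī,α}(x,y) = (x'+(q−1)y')^{h−|I|} g_f^{I,α}(x',y'),
x' = x+(q−2)y, y' = −y (so x'+(q−1)y' = x−y), stated with cleared denominators. -/
theorem stmt6 (q n h : ℕ) (hq : 2 ≤ q) (hh : h ≤ n)
    (f : (Fin n → Fin q) → ℂ)
    (hf : ∀ α, ∑ β ∈ Finset.univ.filter (fun β => hammingDist α β = 1), f β
            = (((q:ℂ)-1)*n - q*h) * f α)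
    (α : Fin n → Fin q) (I : Finset (Fin n)) (x y : ℂ) :
    (x + ((q:ℂ)-1)*y)^h * (x - y)^I.card *
        ∑ j ∈ Finset.range (Iᶜ.card + 1), locdist f α Iᶜ j * y^j * x^(Iᶜ.card - j) =
      (x - y)^h * (x + ((q:ℂ)-1)*y)^(Iᶜ.card) *
        ∑ j ∈ Finset.range (I.card + 1),
          locdist f α I j * (-y)^j * (x + ((q:ℂ)-2)*y)^(I.card - j) := by
  have hq0 : ((q:ℂ))^n ≠ 0 := pow_ne_zero n (by exact_mod_cast (by omega : q ≠ 0))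
  apply mul_left_cancel₀ hq0
  have hgen : ∀ (J : Finset (Fin n)) (C w v : ℂ),
      (q:ℂ)^n * (C * ∑ j ∈ Finset.range (J.card + 1), locdist f α J j * w^j * v^(J.card - j))
        = ∑ u, fc f u * (C * ∑ j ∈ Finset.range (J.card + 1),
            locdist (chi u) α J j * w^j * v^(J.card - j)) := by
    intro J C w v
    rw [mul_left_comm, Finset.mul_sum]
    have hterm : ∀ j ∈ Finset.range (J.card + 1),
        (q:ℂ)^n * (locdist f α J j * w^j * v^(J.card - j))
          = ∑ u, fc f u * locdist (chi u) α J j * (w^j * v^(J.card - j)) := by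
      intro j _
      rw [show (q:ℂ)^n * (locdist f α J j * w^j * v^(J.card - j))
          = ((q:ℂ)^n * locdist f α J j) * (w^j * v^(J.card - j)) by ring,
        locdist_sum hq f α J j, Finset.sum_mul]
    rw [Finset.sum_congr rfl hterm, Finset.sum_comm, Finset.mul_sum]
    refine Finset.sum_congr rfl (fun u _ => ?_)
    simp only [Finset.mul_sum]
    refine Finset.sum_congr rfl (fun j _ => ?_)
    ring
  rw [hgen Iᶜ ((x + ((q:ℂ)-1)*y)^h * (x - y)^I.card) y x,
      hgen I ((x - y)^h * (x + ((q:ℂ)-1)*y)^(Iᶜ.card)) (-y) (x + ((q:ℂ)-2)*y)]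
  refine Finset.sum_congr rfl (fun u _ => ?_)
  by_cases hw : wt u = h
  · rw [chi_case hq u α hw I x y]
  · rw [support hq f hf u hw, zero_mul, zero_mul]
end

section
/- Let f be a λ-eigenfunction of F_q^n with λ = (q−1)n−qh, and let I ⊆ {1,...,n} with |I| = k where n−h < k ≤ h. Then for every vertex α and every j with 0 ≤ j ≤ n−k, the components satisfy the linear system Σ_{i=0}^{j} (q−1)^{j−i} C(h+k−n, j−i) v_i^{Ī,f}(α) = Σ_{i=0}^{j} (−1)^i P_{j−i}^{(q−1)}(h−k; h−i) v_i^{I,f}(α). -/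
open Finset Polynomial


def kr (c : ℤ) (i t d : ℕ) : ℤ :=
  ∑ j ∈ Finset.range (i+1), (-1:ℤ)^j * c^(i-j) * (t.choose j : ℤ) * (d.choose (i-j) : ℤ)

lemma kr_eq_zero (c : ℤ) {i t d : ℕ} (h : t + d < i) : kr c i t d = 0 := by
  apply Finset.sum_eq_zero
  intro j hj
  rcases le_or_gt j t with hjt | hjt
  · have : d < i - j := by omega
    simp [Nat.choose_eq_zero_of_lt this]
  · simp [Nat.choose_eq_zero_of_lt hjt]

lemma HG {R : Type*} [CommRing R] (c : ℤ) (t d : ℕ) (y z : R) :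
    ∑ i ∈ range (t+d+1), (kr c i t d : R) * y^i * z^(t+d-i)
      = (z - y)^t * (z + (c:R) * y)^d := by
  set N := t + d with hN
  set G : ℕ × ℕ → R := fun p =>
    (-1:R)^p.1 * (c:R)^p.2 * (t.choose p.1 : R) * (d.choose p.2 : R)
      * y^(p.1+p.2) * z^(N-(p.1+p.2)) with hG
  have hGzero : ∀ p : ℕ × ℕ, (t < p.1 ∨ d < p.2) → G p = 0 := by
    rintro p (h | h) <;> simp [hG, Nat.choose_eq_zero_of_lt h]
  have hL : ∑ i ∈ range (N+1), (kr c i t d : R) * y^i * z^(N-i)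
      = ∑ i ∈ range (N+1), ∑ p ∈ Finset.HasAntidiagonal.antidiagonal i, G p := by
    refine Finset.sum_congr rfl fun i hi => ?_
    rw [Finset.Nat.sum_antidiagonal_eq_sum_range_succ_mk]
    rw [kr, Int.cast_sum, Finset.sum_mul, Finset.sum_mul]
    refine Finset.sum_congr rfl fun j hj => ?_
    push_cast
    simp only [mem_range, Nat.lt_succ_iff] at hj
    have h1 : j + (i - j) = i := by omega
    simp only [hG, h1]
    try ring
  have hbiU : ∑ i ∈ range (N+1), ∑ p ∈ Finset.HasAntidiagonal.antidiagonal i, G p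
      = ∑ p ∈ (range (N+1)).biUnion Finset.HasAntidiagonal.antidiagonal, G p := by
    rw [Finset.sum_biUnion]
    intro a _ b _ hab
    simp only [Finset.disjoint_left, Finset.HasAntidiagonal.mem_antidiagonal]
    intro p hp hq
    exact hab (by omega)
  have hsub1 : (range (N+1)).biUnion Finset.HasAntidiagonal.antidiagonal ⊆ range (N+1) ×ˢ range (N+1) := by
    intro p hp
    simp only [Finset.mem_biUnion, Finset.mem_range, Finset.HasAntidiagonal.mem_antidiagonal] at hp
    obtain ⟨i, hi, hpi⟩ := hp
    simp only [Finset.mem_product, Finset.mem_range]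
    omega
  have hbig1 : ∑ p ∈ (range (N+1)).biUnion Finset.HasAntidiagonal.antidiagonal, G p
      = ∑ p ∈ range (N+1) ×ˢ range (N+1), G p := by
    apply Finset.sum_subset hsub1
    intro p hp hnp
    simp only [Finset.mem_biUnion, Finset.mem_range, Finset.HasAntidiagonal.mem_antidiagonal,
      Finset.mem_product] at hp hnp
    apply hGzero
    by_contra hc
    push_neg at hc
    exact hnp ⟨p.1 + p.2, by omega, by simp [Finset.HasAntidiagonal.mem_antidiagonal]⟩
  have hbig2 : ∑ p ∈ range (t+1) ×ˢ range (d+1), G p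
      = ∑ p ∈ range (N+1) ×ˢ range (N+1), G p := by
    apply Finset.sum_subset
    · intro p hp
      simp only [Finset.mem_product, Finset.mem_range] at hp ⊢
      omega
    · intro p hp hnp
      simp only [Finset.mem_product, Finset.mem_range] at hp hnp
      apply hGzero
      omega
  have hR : (z - y)^t * (z + (c:R) * y)^d = ∑ p ∈ range (t+1) ×ˢ range (d+1), G p := by
    have e1 : (z - y)^t = ∑ a ∈ range (t+1), (-y)^a * z^(t-a) * (t.choose a : R) := by
      rw [sub_eq_add_neg, add_comm, add_pow]
    have e2 : (z + (c:R) * y)^d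
        = ∑ b ∈ range (d+1), ((c:R)*y)^b * z^(d-b) * (d.choose b : R) := by
      rw [add_comm, add_pow]
    rw [e1, e2, Finset.sum_mul_sum, ← Finset.sum_product']
    refine Finset.sum_congr rfl fun p hp => ?_
    simp only [Finset.mem_product, Finset.mem_range, Nat.lt_succ_iff] at hp
    have h2 : N - (p.1 + p.2) = t - p.1 + (d - p.2) := by omega
    simp only [hG, h2]
    rw [pow_add, pow_add, neg_pow, mul_pow]
    ring
  rw [hL, hbiU, hbig1, hR, hbig2]

lemma coeff_gf (c : ℤ) (t d i : ℕ) :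
    (((1 - X)^t * (1 + (c : ℤ[X]) * X)^d).coeff i) = kr c i t d := by
  have h := HG (R := ℤ[X]) c t d X 1
  simp only [one_pow, mul_one] at h
  rw [show ((1:ℤ[X]) - X) = 1 - X from rfl] at h
  rw [← h]
  rw [Polynomial.finset_sum_coeff]
  have : ∀ i' ∈ range (t+d+1),
      (((kr c i' t d : ℤ[X]) * X ^ i').coeff i) = if i = i' then kr c i' t d else 0 := by
    intro i' _
    rw [← Polynomial.C_eq_intCast, Polynomial.coeff_C_mul, Polynomial.coeff_X_pow]
    split <;> simp
  rw [Finset.sum_congr rfl this, Finset.sum_ite_eq]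
  split
  · rfl
  · rename_i hmem
    rw [kr_eq_zero]
    simp only [Finset.mem_range, Nat.lt_succ_iff, not_le] at hmem
    omega

lemma kr_zero_left (c : ℤ) (m M : ℕ) : kr c m 0 M = c^m * (M.choose m) := by
  rw [kr, Finset.sum_eq_single 0]
  · simp
  · intro j _ hj
    have : 0 < j := Nat.pos_of_ne_zero hj
    simp [Nat.choose_eq_zero_of_lt this]
  · simp

lemma intid (q n h k t j : ℕ) (hq : 2 ≤ q) (hh : h ≤ n) (hkn : k ≤ n) (hk1 : n - h < k) (hk2 : k ≤ h)
    (ht1 : t ≤ k) (ht2 : h ≤ n - k + t) (hth : t ≤ h) :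
    ∑ i ∈ Finset.range (j+1),
        ((q:ℤ)-1)^(j-i) * ((h+k-n).choose (j-i) : ℤ) * kraw q i (h-t) (n-k) =
      ∑ i ∈ Finset.range (j+1),
        (-1:ℤ)^i * kraw (q-1) (j-i) (h-k) (h-i) * kraw q i t k := by
  set c1 : ℤ := (q:ℤ) - 1 with hc1
  set c2 : ℤ := (q:ℤ) - 2 with hc2
  have hM : h + k - n ≤ t := by omega
  have hht : h - t ≤ n - k := by omega
  have hkraw : ∀ (Q i t' N : ℕ), kraw Q i t' N = kr ((Q:ℤ)-1) i t' (N-t') := fun _ _ _ _ => rfl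
  have hc2' : ((q-1 : ℕ) : ℤ) - 1 = c2 := by
    have h1 : (1:ℕ) ≤ q := by omega
    push_cast [h1]
    ring
  have e1 : (n-k) - (h-t) = t - (h+k-n) := by omega
  have hP1 : ∀ m, (((1 + (c1:ℤ[X]) * X)^(h+k-n) : ℤ[X])).coeff m
      = c1^m * ((h+k-n).choose m : ℤ) := by
    intro m
    rw [← kr_zero_left c1 m (h+k-n), ← coeff_gf c1 0 (h+k-n) m]
    simp
  have LHSeq : ∑ i ∈ Finset.range (j+1),
      ((q:ℤ)-1)^(j-i) * ((h+k-n).choose (j-i) : ℤ) * kraw q i (h-t) (n-k)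
      = (((1 - X)^(h-t) * (1 + (c1:ℤ[X]) * X)^t : ℤ[X])).coeff j := by
    have hexp : t - (h+k-n) + (h+k-n) = t := by omega
    have hsplit : ((1 - X)^(h-t) * (1 + (c1:ℤ[X]) * X)^t : ℤ[X])
        = ((1 - X)^(h-t) * (1 + (c1:ℤ[X]) * X)^(t-(h+k-n)))
          * ((1 + (c1:ℤ[X]) * X)^(h+k-n)) := by
      rw [mul_assoc, ← pow_add, hexp]
    rw [hsplit, Polynomial.coeff_mul, Finset.Nat.sum_antidiagonal_eq_sum_range_succ_mk]
    refine Finset.sum_congr rfl fun i hi => ?_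
    simp only
    rw [hkraw, e1, ← coeff_gf c1 (h-t) (t-(h+k-n)) i, hP1]
    ring
  rw [LHSeq]
  set Z : ℤ[X] := 1 + (c2:ℤ[X]) * X with hZ
  have hHG := HG (R := ℤ[X]) c1 t (k-t) (-X) Z
  have htk : t + (k - t) = k := by omega
  rw [htk] at hHG
  have hz1 : Z - (-X) = 1 + (c1:ℤ[X]) * X := by
    rw [hZ, hc1, hc2]; push_cast; ring
  have hz2 : Z + (c1:ℤ[X]) * (-X) = 1 - X := by
    rw [hZ, hc1, hc2]; push_cast; ring
  rw [hz1, hz2] at hHG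
  have hexp2 : h - k + (k - t) = h - t := by omega
  have key : ((1 - X)^(h-t) * (1 + (c1:ℤ[X]) * X)^t : ℤ[X])
      = ∑ i ∈ Finset.range (k+1),
          (1-X)^(h-k) * ((kr c1 i t (k-t) : ℤ[X]) * (-X)^i * Z^(k-i)) := by
    rw [← Finset.mul_sum, hHG, show ((1-X:ℤ[X]))^(h-t) = (1-X)^(h-k) * (1-X)^(k-t) by
      rw [← pow_add, hexp2]]
    ring
  rw [key, Polynomial.finset_sum_coeff]
  have term_eq : ∀ i ∈ Finset.range (k+1),
      (((1-X)^(h-k) * ((kr c1 i t (k-t) : ℤ[X]) * (-X)^i * Z^(k-i))) : ℤ[X]).coeff j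
      = if i ≤ j then (-1:ℤ)^i * kr c2 (j-i) (h-k) (k-i) * kr c1 i t (k-t) else 0 := by
    intro i _
    have hrw : (((1-X)^(h-k) * ((kr c1 i t (k-t) : ℤ[X]) * (-X)^i * Z^(k-i))) : ℤ[X])
        = ((((-1:ℤ)^i * kr c1 i t (k-t) : ℤ) : ℤ[X]) * ((1-X)^(h-k) * Z^(k-i))) * X^i := by
      push_cast
      ring
    rw [hrw, Polynomial.coeff_mul_X_pow', ← zsmul_eq_mul, Polynomial.coeff_smul, smul_eq_mul]
    rw [show ((1-X:ℤ[X])^(h-k) * Z^(k-i)) = ((1 - X)^(h-k) * (1 + (c2:ℤ[X]) * X)^(k-i)) from rfl]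
    rw [coeff_gf c2 (h-k) (k-i) (j-i)]
    split <;> ring
  rw [Finset.sum_congr rfl term_eq]
  have goal_eq : ∀ i ∈ Finset.range (j+1),
      (-1:ℤ)^i * kraw (q-1) (j-i) (h-k) (h-i) * kraw q i t k
      = if i ≤ k then (-1:ℤ)^i * kr c2 (j-i) (h-k) (k-i) * kr c1 i t (k-t) else 0 := by
    intro i _
    rw [hkraw, hkraw, hc2']
    by_cases hik : i ≤ k
    · rw [if_pos hik, show (h-i) - (h-k) = k - i by omega]
    · rw [if_neg hik, kr_eq_zero c1 (show t + (k-t) < i by omega)]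
      ring
  rw [Finset.sum_congr rfl goal_eq]
  rw [← Finset.sum_filter, ← Finset.sum_filter]
  have hfilt : ∀ a b : ℕ, (Finset.range (a+1)).filter (fun i => i ≤ b)
      = Finset.range (min a b + 1) := by
    intro a b
    ext x
    simp only [Finset.mem_filter, Finset.mem_range, Nat.lt_succ_iff]
    omega
  rw [hfilt, hfilt, Nat.min_comm]

noncomputable def zeta (q : ℕ) : ℂ := Complex.exp (2 * Real.pi * Complex.I / q)

lemma zeta_prim (q : ℕ) (hq : q ≠ 0) : IsPrimitiveRoot (zeta q) q :=
  Complex.isPrimitiveRoot_exp q hq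

noncomputable def chi {q n : ℕ} (s x : Fin n → Fin q) : ℂ :=
  ∏ m, zeta q ^ ((s m : ℕ) * (x m : ℕ))

lemma geom_zero {q : ℕ} (hq : q ≠ 0) {u : ℂ} (hu : u ^ q = 1) (hu1 : u ≠ 1) :
    ∑ c : Fin q, u ^ (c : ℕ) = 0 := by
  rw [Fin.sum_univ_eq_sum_range (fun c => u ^ c) q, geom_sum_eq hu1, hu]
  simp

lemma zeta_pow_q {q : ℕ} (hq : q ≠ 0) (a : ℕ) : (zeta q ^ a) ^ q = 1 := by
  rw [← pow_mul, mul_comm, pow_mul, (zeta_prim q hq).pow_eq_one, one_pow]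

lemma conj_mul_self {q : ℕ} (hq : q ≠ 0) (a : ℕ) :
    (starRingEnd ℂ) (zeta q ^ a) * zeta q ^ a = 1 := by
  have habs : ‖zeta q ^ a‖ = 1 :=
    Complex.norm_eq_one_of_pow_eq_one (zeta_pow_q hq a) hq
  rw [← Complex.inv_eq_conj habs, inv_mul_cancel₀]
  intro h0
  rw [h0] at habs
  simp at habs

lemma sum_conj_mul (q : ℕ) (hq : 2 ≤ q) (a b : Fin q) :
    ∑ c : Fin q, (starRingEnd ℂ) (zeta q ^ ((c:ℕ) * (a:ℕ))) * zeta q ^ ((c:ℕ) * (b:ℕ))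
      = if a = b then (q:ℂ) else 0 := by
  have hq0 : q ≠ 0 := by omega
  have hterm : ∀ c : Fin q,
      (starRingEnd ℂ) (zeta q ^ ((c:ℕ) * (a:ℕ))) * zeta q ^ ((c:ℕ) * (b:ℕ))
        = ((starRingEnd ℂ) (zeta q ^ (a:ℕ)) * zeta q ^ (b:ℕ)) ^ (c:ℕ) := by
    intro c
    rw [mul_comm (c:ℕ) (a:ℕ), mul_comm (c:ℕ) (b:ℕ), pow_mul, pow_mul, map_pow, ← mul_pow]
  rw [Finset.sum_congr rfl (fun c _ => hterm c)]
  set v := (starRingEnd ℂ) (zeta q ^ (a:ℕ)) * zeta q ^ (b:ℕ) with hv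
  have hvq : v ^ q = 1 := by
    rw [hv, mul_pow, ← map_pow, zeta_pow_q hq0, zeta_pow_q hq0, map_one, one_mul]
  by_cases hab : a = b
  · subst hab
    rw [if_pos rfl, hv]
    rw [Finset.sum_congr rfl (fun c _ => by rw [conj_mul_self hq0, one_pow])]
    simp
  · rw [if_neg hab]
    apply geom_zero hq0 hvq
    intro hv1
    apply hab
    have habs : ‖zeta q ^ (a:ℕ)‖ = 1 :=
      Complex.norm_eq_one_of_pow_eq_one (zeta_pow_q hq0 _) hq0
    have hz : zeta q ^ (a:ℕ) ≠ 0 := by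
      intro h0; rw [h0] at habs; simp at habs
    have h2 : (zeta q ^ (a:ℕ))⁻¹ * zeta q ^ (b:ℕ) = 1 := by
      rw [Complex.inv_eq_conj habs]; exact hv1
    rw [inv_mul_eq_div, div_eq_one_iff_eq hz] at h2
    exact Fin.ext ((zeta_prim q hq0).pow_inj b.isLt a.isLt h2).symm

lemma sum_compl_single (q : ℕ) (hq : 2 ≤ q) (s a : Fin q) :
    ∑ c ∈ ({a}ᶜ : Finset (Fin q)), zeta q ^ ((s:ℕ) * (c:ℕ))
      = (if (s:ℕ) = 0 then ((q:ℂ) - 1) else -1) * zeta q ^ ((s:ℕ) * (a:ℕ)) := by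
  have hq0 : q ≠ 0 := by omega
  have hsplit := Finset.sum_compl_add_sum ({a} : Finset (Fin q))
      (fun c => zeta q ^ ((s:ℕ) * (c:ℕ)))
  rw [Finset.sum_singleton] at hsplit
  by_cases hs : (s:ℕ) = 0
  · rw [if_pos hs]
    have : ∀ c : Fin q, zeta q ^ ((s:ℕ) * (c:ℕ)) = 1 := by
      intro c; rw [hs, zero_mul, pow_zero]
    rw [Finset.sum_congr rfl (fun c _ => this c), this a, Finset.sum_const, Finset.card_compl,
      Finset.card_singleton, Fintype.card_fin, nsmul_eq_mul, mul_one, mul_one]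
    push_cast [show (1:ℕ) ≤ q by omega]
    ring
  · rw [if_neg hs]
    have huniv : ∑ c : Fin q, zeta q ^ ((s:ℕ) * (c:ℕ)) = 0 := by
      have : ∀ c : Fin q, zeta q ^ ((s:ℕ) * (c:ℕ)) = (zeta q ^ (s:ℕ)) ^ (c:ℕ) := by
        intro c; rw [pow_mul]
      rw [Finset.sum_congr rfl (fun c _ => this c)]
      apply geom_zero hq0 (zeta_pow_q hq0 _)
      exact (zeta_prim q hq0).pow_ne_one_of_pos_of_lt hs s.isLt
    rw [huniv] at hsplit
    linear_combination hsplit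

lemma coeff_rev (c : ℤ) (t d i : ℕ) (hid : i ≤ t + d) :
    (((X - 1)^t * (X + (c : ℂ[X]))^d : ℂ[X])).coeff (t + d - i) = ((kr c i t d : ℤ) : ℂ) := by
  have h := HG (R := ℂ[X]) c t d 1 X
  simp only [one_pow, mul_one] at h
  rw [← h, Polynomial.finset_sum_coeff]
  rw [Finset.sum_eq_single_of_mem i (by simp [Finset.mem_range]; omega)]
  · rw [← zsmul_eq_mul, Polynomial.coeff_smul, Polynomial.coeff_X_pow, if_pos rfl]
    simp
  · intro j hj hji
    simp only [Finset.mem_range, Nat.lt_succ_iff] at hj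
    rw [← zsmul_eq_mul, Polynomial.coeff_smul, Polynomial.coeff_X_pow,
      if_neg (by omega), smul_zero]

lemma count_sum {q n : ℕ} (hq : 2 ≤ q) (J S : Finset (Fin n)) (i : ℕ) :
    ∑ T ∈ J.powersetCard i, ∏ m ∈ T, (if m ∈ S then (-1 : ℂ) else ((q:ℂ)-1))
      = ((kraw q i (J ∩ S).card J.card : ℤ) : ℂ) := by
  set t := (J ∩ S).card with hts
  set N := J.card with hN
  have htN : t ≤ N := Finset.card_le_card Finset.inter_subset_left
  have hkr : kraw q i t N = kr ((q:ℤ)-1) i t (N-t) := rfl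
  by_cases hi : i ≤ N
  · have hV := Finset.prod_X_add_C_coeff (R := ℂ) J
      (fun m => if m ∈ S then (-1 : ℂ) else ((q:ℂ)-1)) (k := N - i) (Nat.sub_le _ _)
    rw [show N - (N - i) = i by omega] at hV
    rw [← hV]
    have hprod : (∏ m ∈ J, (X + Polynomial.C (if m ∈ S then (-1 : ℂ) else ((q:ℂ)-1))))
        = (X - 1)^t * (X + (((q:ℤ)-1 : ℤ) : ℂ[X]))^(N - t) := by
      rw [← Finset.prod_filter_mul_prod_filter_not J (fun m => m ∈ S)]
      have h1 : ∀ m ∈ J.filter (fun m => m ∈ S),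
          (X + Polynomial.C (if m ∈ S then (-1 : ℂ) else ((q:ℂ)-1))) = X - 1 := by
        intro m hm
        simp only [Finset.mem_filter] at hm
        rw [if_pos hm.2, map_neg, map_one]
        ring
      have h2 : ∀ m ∈ J.filter (fun m => ¬ m ∈ S),
          (X + Polynomial.C (if m ∈ S then (-1 : ℂ) else ((q:ℂ)-1)))
            = X + (((q:ℤ)-1 : ℤ) : ℂ[X]) := by
        intro m hm
        simp only [Finset.mem_filter] at hm
        rw [if_neg hm.2, show ((q:ℂ)-1) = ((q:ℕ):ℂ) - 1 from rfl, map_sub, map_one,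
          map_natCast]
        push_cast
        ring
      rw [Finset.prod_congr rfl h1, Finset.prod_congr rfl h2, Finset.prod_const,
        Finset.prod_const]
      have hc1 : (J.filter (fun m => m ∈ S)).card = t := by
        rw [hts, Finset.filter_mem_eq_inter]
      have hc2 : (J.filter (fun m => ¬ m ∈ S)).card = N - t := by
        have := Finset.card_filter_add_card_filter_not
          (s := J) (p := fun m => m ∈ S)
        omega
      rw [hc1, hc2]
    rw [hprod, show N - i = t + (N - t) - i by omega,
      coeff_rev ((q:ℤ)-1) t (N-t) i (by omega), hkr]
  · rw [Finset.powersetCard_eq_empty.mpr (by omega), Finset.sum_empty, hkr,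
      kr_eq_zero _ (by omega), Int.cast_zero]

lemma cell_support {q n : ℕ} (α : Fin n → Fin q) (T : Finset (Fin n))
    (β : Fin n → Fin q)
    (hβ : β ∈ Fintype.piFinset (fun m => if m ∈ T then ({α m}ᶜ : Finset (Fin q)) else {α m})) :
    T = Finset.univ.filter (fun m => β m ≠ α m) := by
  rw [Fintype.mem_piFinset] at hβ
  ext m
  have := hβ m
  by_cases hmT : m ∈ T
  · simp only [hmT, if_true, Finset.mem_compl, Finset.mem_singleton] at this
    simp [hmT, this]
  · simp only [hmT, if_false, Finset.mem_singleton] at this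
    simp [hmT, this]

lemma locdist_chi {q n : ℕ} (hq : 2 ≤ q) (s α : Fin n → Fin q) (J : Finset (Fin n)) (i : ℕ) :
    locdist (chi s) α J i
      = chi s α * ((kraw q i (J ∩ (Finset.univ.filter (fun m => (s m : ℕ) ≠ 0))).card
          J.card : ℤ) : ℂ) := by
  classical
  set cell : Finset (Fin n) → Finset (Fin n → Fin q) :=
    fun T => Fintype.piFinset (fun m => if m ∈ T then ({α m}ᶜ : Finset (Fin q)) else {α m})
    with hcell
  have hham : ∀ β : Fin n → Fin q,
      hammingDist α β = (Finset.univ.filter (fun m => β m ≠ α m)).card := by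
    intro β
    rw [hammingDist_comm]
    rfl
  have hset : Finset.univ.filter
      (fun β : Fin n → Fin q => (∀ m ∈ Jᶜ, β m = α m) ∧ hammingDist α β = i)
      = (J.powersetCard i).biUnion cell := by
    ext β
    simp only [Finset.mem_filter, Finset.mem_univ, true_and, Finset.mem_biUnion,
      Finset.mem_powersetCard]
    constructor
    · rintro ⟨hout, hdist⟩
      refine ⟨Finset.univ.filter (fun m => β m ≠ α m), ⟨?_, ?_⟩, ?_⟩
      · intro m hm
        simp only [Finset.mem_filter, Finset.mem_univ, true_and] at hm
        by_contra hmJ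
        exact hm (hout m (Finset.mem_compl.mpr hmJ))
      · rw [← hdist, hham]
      · rw [hcell, Fintype.mem_piFinset]
        intro m
        by_cases hm : β m = α m <;> simp [hm]
    · rintro ⟨T, ⟨hTJ, hTc⟩, hβ⟩
      have hchar := cell_support α T β hβ
      constructor
      · intro m hm
        by_contra hne
        have : m ∈ T := by
          rw [hchar]
          simp [hne]
        exact (Finset.mem_compl.mp hm) (hTJ this)
      · rw [hham, ← hchar, hTc]
  rw [locdist, hset, Finset.sum_biUnion]
  · have hcellsum : ∀ T ∈ J.powersetCard i, ∑ β ∈ cell T, chi s β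
        = chi s α * ∏ m ∈ T, (if m ∈ Finset.univ.filter (fun m => (s m : ℕ) ≠ 0)
            then (-1 : ℂ) else ((q:ℂ)-1)) := by
      intro T _
      rw [hcell]
      simp only [chi]
      rw [← Finset.prod_univ_sum (fun m => if m ∈ T then ({α m}ᶜ : Finset (Fin q)) else {α m})
        (fun m c => zeta q ^ ((s m : ℕ) * (c : ℕ)))]
      have hfac : ∀ m : Fin n, (∑ c ∈ (if m ∈ T then ({α m}ᶜ : Finset (Fin q)) else {α m}),
          zeta q ^ ((s m : ℕ) * (c:ℕ)))
          = zeta q ^ ((s m : ℕ) * (α m : ℕ))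
            * (if m ∈ T then (if m ∈ Finset.univ.filter (fun m => (s m : ℕ) ≠ 0)
                then (-1 : ℂ) else ((q:ℂ)-1)) else 1) := by
        intro m
        by_cases hmT : m ∈ T
        · rw [if_pos hmT, if_pos hmT, sum_compl_single q hq (s m) (α m)]
          by_cases hs : (s m : ℕ) = 0
          · simp only [hs, if_true, Finset.mem_filter, Finset.mem_univ, true_and, not_not]
            rw [if_neg (by simpa using hs)]
            ring
          · simp only [hs, if_false]
            rw [if_pos (by simpa using hs)]
            ring
        · rw [if_neg hmT, if_neg hmT, Finset.sum_singleton, mul_one]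
      rw [Finset.prod_congr rfl (fun m _ => hfac m), Finset.prod_mul_distrib]
      congr 1
      rw [Finset.prod_ite_mem, Finset.univ_inter]
    rw [Finset.sum_congr rfl hcellsum, ← Finset.mul_sum,
      count_sum hq J (Finset.univ.filter (fun m => (s m : ℕ) ≠ 0)) i]
  · intro T1 h1 T2 h2 hne
    simp only [Function.onFun, Finset.disjoint_left]
    intro β hβ1 hβ2
    exact hne ((cell_support α T1 β hβ1).trans (cell_support α T2 β hβ2).symm)

lemma kraw_one (q w m : ℕ) : kraw q 1 w m = ((q:ℤ)-1) * ((m-w : ℕ) : ℤ) - (w:ℤ) := by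
  simp [kraw, Finset.sum_range_succ, Nat.choose_one_right]
  ring

lemma chi_sphere {q n : ℕ} (hq : 2 ≤ q) (s y : Fin n → Fin q) :
    ∑ β ∈ Finset.univ.filter (fun β => hammingDist y β = 1), chi s β
      = ((kraw q 1 (Finset.univ.filter (fun m => (s m : ℕ) ≠ 0)).card n : ℤ) : ℂ)
          * chi s y := by
  have h1 := locdist_chi hq s y Finset.univ 1
  rw [locdist] at h1
  rw [show Finset.univ.filter (fun β : Fin n → Fin q => hammingDist y β = 1)
      = Finset.univ.filter
        (fun β : Fin n → Fin q => (∀ m ∈ (Finset.univ : Finset (Fin n))ᶜ, β m = y m)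
          ∧ hammingDist y β = 1) by
    apply Finset.filter_congr
    intro β _
    simp]
  rw [h1, Finset.univ_inter, Finset.card_univ, Fintype.card_fin]
  ring

lemma coeff_vanish {q n h : ℕ} (hq : 2 ≤ q) (f : (Fin n → Fin q) → ℂ)
    (hf : ∀ α, ∑ β ∈ Finset.univ.filter (fun β => hammingDist α β = 1), f β
            = (((q:ℂ)-1)*n - q*h) * f α)
    (s : Fin n → Fin q)
    (hw : (Finset.univ.filter (fun m => (s m : ℕ) ≠ 0)).card ≠ h) :
    ∑ x, f x * (starRingEnd ℂ) (chi s x) = 0 := by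
  set w := (Finset.univ.filter (fun m => (s m : ℕ) ≠ 0)).card with hwdef
  have hwn : w ≤ n := by
    rw [hwdef]
    calc (Finset.univ.filter (fun m => (s m : ℕ) ≠ 0)).card
        ≤ (Finset.univ : Finset (Fin n)).card := Finset.card_le_card (Finset.filter_subset _ _)
      _ = n := by rw [Finset.card_univ, Fintype.card_fin]
  set lam : ℂ := ((q:ℂ)-1)*n - q*h with hlam
  set mu : ℂ := ((kraw q 1 w n : ℤ) : ℂ) with hmu
  set C : ℂ := ∑ x, f x * (starRingEnd ℂ) (chi s x) with hC
  have hA : ∑ x : Fin n → Fin q,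
      (∑ β ∈ Finset.univ.filter (fun β => hammingDist x β = 1), f β)
        * (starRingEnd ℂ) (chi s x) = lam * C := by
    rw [hC, Finset.mul_sum]
    refine Finset.sum_congr rfl fun x _ => ?_
    rw [hf x]
    ring
  have hB : ∑ x : Fin n → Fin q,
      (∑ β ∈ Finset.univ.filter (fun β => hammingDist x β = 1), f β)
        * (starRingEnd ℂ) (chi s x) = mu * C := by
    have hdistrib : ∀ x : Fin n → Fin q,
        (∑ β ∈ Finset.univ.filter (fun β => hammingDist x β = 1), f β)
          * (starRingEnd ℂ) (chi s x)
        = ∑ β ∈ Finset.univ.filter (fun β => hammingDist x β = 1),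
            f β * (starRingEnd ℂ) (chi s x) := fun x => Finset.sum_mul _ _ _
    rw [Finset.sum_congr rfl (fun x _ => hdistrib x)]
    rw [Finset.sum_comm' (t' := Finset.univ)
      (s' := fun β => Finset.univ.filter (fun x => hammingDist β x = 1))
      (by
        intro x β
        simp only [Finset.mem_univ, true_and, and_true, Finset.mem_filter]
        rw [hammingDist_comm])]
    rw [hC, Finset.mul_sum]
    refine Finset.sum_congr rfl fun β _ => ?_
    rw [← Finset.mul_sum, ← map_sum, chi_sphere hq s β, map_mul, map_intCast]
    ring
  have hlm : lam ≠ mu := by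
    rw [hlam, hmu, kraw_one]
    intro heq
    have hcast : (((q:ℤ)-1)*(n:ℤ) - (q:ℤ)*(h:ℤ) : ℂ)
        = ((((q:ℤ)-1) * ((n-w : ℕ) : ℤ) - (w:ℤ) : ℤ) : ℂ) := by
      push_cast
      push_cast at heq
      linear_combination heq
    have hZ : ((q:ℤ)-1)*(n:ℤ) - (q:ℤ)*(h:ℤ) = ((q:ℤ)-1) * ((n-w : ℕ) : ℤ) - (w:ℤ) := by
      exact_mod_cast hcast
    rw [Int.ofNat_sub hwn] at hZ
    have hq0 : (q:ℤ) ≠ 0 := by exact_mod_cast (by omega : q ≠ 0)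
    have : (q:ℤ) * ((w:ℤ) - (h:ℤ)) = 0 := by linarith
    have := mul_eq_zero.mp this
    rcases this with h1 | h1
    · exact hq0 h1
    · apply hw
      have : (w:ℤ) = (h:ℤ) := by linarith
      exact_mod_cast this
  have := hA.symm.trans hB
  by_contra hC0
  exact hlm (mul_right_cancel₀ hC0 this)

lemma inversion {q n : ℕ} (hq : 2 ≤ q) (f : (Fin n → Fin q) → ℂ) (x : Fin n → Fin q) :
    (q:ℂ)^n * f x
      = ∑ s : Fin n → Fin q, (∑ y, f y * (starRingEnd ℂ) (chi s y)) * chi s x := by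
  have hstep1 : ∀ s : Fin n → Fin q,
      (∑ y, f y * (starRingEnd ℂ) (chi s y)) * chi s x
        = ∑ y, f y * ((starRingEnd ℂ) (chi s y) * chi s x) := by
    intro s
    rw [Finset.sum_mul]
    exact Finset.sum_congr rfl fun y _ => by ring
  rw [Finset.sum_congr rfl (fun s _ => hstep1 s), Finset.sum_comm]
  have hinner : ∀ y : Fin n → Fin q,
      ∑ s : Fin n → Fin q, (starRingEnd ℂ) (chi s y) * chi s x
        = if y = x then (q:ℂ)^n else 0 := by
    intro y
    have hterm : ∀ s : Fin n → Fin q, (starRingEnd ℂ) (chi s y) * chi s x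
        = ∏ m, (starRingEnd ℂ) (zeta q ^ ((s m : ℕ) * (y m : ℕ)))
            * zeta q ^ ((s m : ℕ) * (x m : ℕ)) := by
      intro s
      rw [chi, chi, map_prod, ← Finset.prod_mul_distrib]
    rw [Finset.sum_congr rfl (fun s _ => hterm s)]
    have hswap := Finset.prod_univ_sum (fun _ : Fin n => (Finset.univ : Finset (Fin q)))
      (fun m c => (starRingEnd ℂ) (zeta q ^ ((c : ℕ) * (y m : ℕ)))
          * zeta q ^ ((c : ℕ) * (x m : ℕ)))
    rw [Fintype.piFinset_univ] at hswap
    rw [← hswap]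
    rw [Finset.prod_congr rfl (fun m _ => sum_conj_mul q hq (y m) (x m))]
    by_cases hyx : y = x
    · subst hyx
      simp [Finset.prod_const, Finset.card_univ]
    · obtain ⟨m, hm⟩ := Function.ne_iff.mp hyx
      rw [if_neg hyx]
      exact Finset.prod_eq_zero (Finset.mem_univ m) (if_neg hm)
  have : ∀ y : Fin n → Fin q,
      ∑ s : Fin n → Fin q, f y * ((starRingEnd ℂ) (chi s y) * chi s x)
        = f y * (if y = x then (q:ℂ)^n else 0) := by
    intro y
    rw [← Finset.mul_sum, hinner y]
  rw [Finset.sum_congr rfl (fun y _ => this y)]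
  simp only [mul_ite, mul_zero]
  rw [Finset.sum_ite_eq' Finset.univ x (fun y => f y * (q:ℂ)^n), if_pos (Finset.mem_univ x)]
  ring

/-- Case n−h < k ≤ h: the linear system relating the (Ī,α)- and (I,α)-local
distributions of a λ-eigenfunction. -/
theorem stmt9 (q n h k : ℕ) (hq : 2 ≤ q) (hh : h ≤ n) (hk1 : n - h < k) (hk2 : k ≤ h)
    (f : (Fin n → Fin q) → ℂ)
    (hf : ∀ α, ∑ β ∈ Finset.univ.filter (fun β => hammingDist α β = 1), f β
            = (((q:ℂ)-1)*n - q*h) * f α)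
    (I : Finset (Fin n)) (hI : I.card = k)
    (α : Fin n → Fin q) (j : ℕ) (hj : j ≤ n - k) :
    ∑ i ∈ Finset.range (j+1),
        ((q:ℂ)-1)^(j-i) * (((h+k-n).choose (j-i) : ℕ) : ℂ) * locdist f α Iᶜ i =
      ∑ i ∈ Finset.range (j+1),
        (-1:ℂ)^i * (kraw (q-1) (j-i) (h-k) (h-i) : ℂ) * locdist f α I i := by
  classical
  have hq0 : (q:ℂ) ≠ 0 := by
    simp only [ne_eq, Nat.cast_eq_zero]
    omega
  have hqn : (q:ℂ)^n ≠ 0 := pow_ne_zero _ hq0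
  have hkn : k ≤ n := le_trans hk2 hh
  -- linearity step
  have hloc : ∀ (J : Finset (Fin n)) (i : ℕ),
      (q:ℂ)^n * locdist f α J i
        = ∑ s : Fin n → Fin q,
            (∑ y, f y * (starRingEnd ℂ) (chi s y)) * locdist (chi s) α J i := by
    intro J i
    rw [locdist, Finset.mul_sum, Finset.sum_congr rfl (fun β _ => inversion hq f β),
      Finset.sum_comm]
    refine Finset.sum_congr rfl fun s _ => ?_
    rw [locdist, Finset.mul_sum]
  have hgen : ∀ (J : Finset (Fin n)) (co : ℕ → ℂ),
      (q:ℂ)^n * (∑ i ∈ Finset.range (j+1), co i * locdist f α J i)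
        = ∑ s : Fin n → Fin q, (∑ y, f y * (starRingEnd ℂ) (chi s y))
            * ∑ i ∈ Finset.range (j+1), co i * locdist (chi s) α J i := by
    intro J co
    rw [Finset.mul_sum,
      Finset.sum_congr rfl (fun i _ => show (q:ℂ)^n * (co i * locdist f α J i)
        = co i * ((q:ℂ)^n * locdist f α J i) by ring),
      Finset.sum_congr rfl (fun i _ => by rw [hloc J i]),
      Finset.sum_congr rfl (fun i _ => Finset.mul_sum _ _ _),
      Finset.sum_comm]
    refine Finset.sum_congr rfl fun s _ => ?_
    rw [Finset.mul_sum]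
    exact Finset.sum_congr rfl fun i _ => by ring
  refine mul_left_cancel₀ hqn ?_
  have hco1 : ∀ i ∈ Finset.range (j+1),
      ((q:ℂ)-1)^(j-i) * (((h+k-n).choose (j-i) : ℕ) : ℂ) * locdist f α Iᶜ i
      = (fun i => ((q:ℂ)-1)^(j-i) * (((h+k-n).choose (j-i) : ℕ) : ℂ)) i
          * locdist f α Iᶜ i := fun i _ => rfl
  have hco2 : ∀ i ∈ Finset.range (j+1),
      (-1:ℂ)^i * (kraw (q-1) (j-i) (h-k) (h-i) : ℂ) * locdist f α I i
      = (fun i => (-1:ℂ)^i * (kraw (q-1) (j-i) (h-k) (h-i) : ℂ)) i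
          * locdist f α I i := fun i _ => rfl
  rw [Finset.sum_congr rfl hco1, Finset.sum_congr rfl hco2, hgen, hgen]
  refine Finset.sum_congr rfl fun s _ => ?_
  set S : Finset (Fin n) := Finset.univ.filter (fun m => (s m : ℕ) ≠ 0) with hS
  by_cases hw : S.card = h
  · -- weight h : use locdist_chi and the integer identity
    congr 1
    set t : ℕ := (I ∩ S).card with ht
    have hIc : (Iᶜ : Finset (Fin n)).card = n - k := by
      rw [Finset.card_compl, hI, Fintype.card_fin]
    have hsplitc := Finset.card_filter_add_card_filter_not
      (s := S) (p := fun m => m ∈ I)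
    have e1 : S.filter (fun m => m ∈ I) = I ∩ S := by
      ext m
      simp only [Finset.mem_filter, Finset.mem_inter]
      tauto
    have e2 : S.filter (fun m => ¬ m ∈ I) = Iᶜ ∩ S := by
      ext m
      simp only [Finset.mem_filter, Finset.mem_inter, Finset.mem_compl]
      tauto
    rw [e1, e2, hw] at hsplitc
    have ht1 : t ≤ k := by
      rw [ht, ← hI]
      exact Finset.card_le_card Finset.inter_subset_left
    have htIc : (Iᶜ ∩ S).card ≤ n - k := by
      rw [← hIc]
      exact Finset.card_le_card Finset.inter_subset_left
    have hth : t ≤ h := by omega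
    have ht2 : h ≤ n - k + t := by omega
    have hcompl : (Iᶜ ∩ S).card = h - t := by omega
    have hid := intid q n h k t j hq hh hkn hk1 hk2 ht1 ht2 hth
    calc ∑ i ∈ Finset.range (j+1),
          ((q:ℂ)-1)^(j-i) * (((h+k-n).choose (j-i) : ℕ) : ℂ) * locdist (chi s) α Iᶜ i
        = chi s α * ((∑ i ∈ Finset.range (j+1),
            ((q:ℤ)-1)^(j-i) * ((h+k-n).choose (j-i) : ℤ) * kraw q i (h-t) (n-k) : ℤ) : ℂ) := by
          rw [Int.cast_sum, Finset.mul_sum]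
          refine Finset.sum_congr rfl fun i _ => ?_
          rw [locdist_chi hq s α Iᶜ i, ← hS, hcompl, hIc]
          push_cast
          ring
      _ = chi s α * ((∑ i ∈ Finset.range (j+1),
            (-1:ℤ)^i * kraw (q-1) (j-i) (h-k) (h-i) * kraw q i t k : ℤ) : ℂ) := by
          rw [hid]
      _ = ∑ i ∈ Finset.range (j+1),
            (-1:ℂ)^i * (kraw (q-1) (j-i) (h-k) (h-i) : ℂ) * locdist (chi s) α I i := by
          rw [Int.cast_sum, Finset.mul_sum]
          refine Finset.sum_congr rfl fun i _ => ?_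
          rw [locdist_chi hq s α I i, ← hS, ← ht, hI]
          push_cast
          ring
  · rw [coeff_vanish hq f hf s (by rw [← hS]; exact hw), zero_mul, zero_mul]
end
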